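/- arXiv:1611.03933 — 5 statements merged into one kernel-verified Lean document; each statement's English description precedes it below -/
import Mathlib

section
/- Let b > 0, R > 0, and let η : [R,∞) → ℝ be continuous with η(s) → 0 as s → ∞. If w ∈ C²([R,∞)) satisfies w''(s) − (b/2)(s w'(s) − w(s)) = η(s) on [R,∞), together with w(s)/s → 0 and s w'(s) − w(s) → 0 as s → ∞, then w is given by the representation formula w(s) = s ∫_s^∞ x^{−2} ( ∫_x^∞ ξ exp(−(b/4)(ξ² − x²)) η(ξ) dξ ) dx for all s ∈ [R,∞). In particular the C² solution of this Cauchy problem is unique. -/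
open Set Filter MeasureTheory

private lemma exists_bound_of_tendsto_aux {f : ℝ → ℝ} {R : ℝ}
    (hc : ContinuousOn f (Set.Ici R)) (h0 : Filter.Tendsto f Filter.atTop (nhds 0)) :
    ∃ C, 0 ≤ C ∧ ∀ x ∈ Set.Ici R, |f x| ≤ C := by
  have h1 : ∀ᶠ x in Filter.atTop, |f x| ≤ 1 := by
    have := Metric.tendsto_nhds.mp h0 1 one_pos
    filter_upwards [this] with x hx
    simpa [Real.dist_eq] using hx.le
  obtain ⟨M, hM⟩ := Filter.eventually_atTop.1 h1
  obtain ⟨C, hC⟩ := (isCompact_Icc (a := R) (b := max R M)).exists_bound_of_continuousOn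
    (hc.mono (fun y hy => hy.1))
  refine ⟨max C 1, le_trans zero_le_one (le_max_right _ _), fun x hx => ?_⟩
  rcases le_total x (max R M) with h | h
  · exact le_trans (by simpa [Real.norm_eq_abs] using hC x ⟨hx, h⟩) (le_max_left _ _)
  · exact le_trans (hM x (le_trans (le_max_right R M) h)) (le_max_right _ _)

/-- Any `C²` solution of `w'' - (b/2)(s w' - w) = η` on `[R,∞)` with
`w/s → 0` and `s w' - w → 0` at infinity is given by the representation formula; in
particular the solution of the Cauchy problem is unique. -/
theorem representation_formula_of_solution
    (b R : ℝ) (hb : 0 < b) (hR : 0 < R) (η : ℝ → ℝ)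
    (hηc : ContinuousOn η (Set.Ici R))
    (hη0 : Filter.Tendsto η Filter.atTop (nhds 0))
    (w : ℝ → ℝ) (hw : ContDiffOn ℝ 2 w (Set.Ici R))
    (hode : ∀ s ∈ Set.Ici R,
      iteratedDerivWithin 2 w (Set.Ici R) s
        - (b / 2) * (s * derivWithin w (Set.Ici R) s - w s) = η s)
    (hlim1 : Filter.Tendsto (fun s => w s / s) Filter.atTop (nhds 0))
    (hlim2 : Filter.Tendsto (fun s => s * derivWithin w (Set.Ici R) s - w s)
      Filter.atTop (nhds 0)) :
    ∀ s ∈ Set.Ici R,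
      w s = s * ∫ x in Set.Ioi s, (x ^ 2)⁻¹ *
        ∫ ξ in Set.Ioi x, ξ * Real.exp (-(b / 4) * (ξ ^ 2 - x ^ 2)) * η ξ := by
  have hudiff : UniqueDiffOn ℝ (Set.Ici R) := uniqueDiffOn_Ici R
  set w1 : ℝ → ℝ := derivWithin w (Set.Ici R) with hw1def
  set v : ℝ → ℝ := fun x => x * w1 x - w x with hvdef
  have hw1c : ContDiffOn ℝ 1 w1 (Set.Ici R) := hw.derivWithin hudiff (by norm_num)
  set w2 : ℝ → ℝ := derivWithin w1 (Set.Ici R) with hw2def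
  -- the ODE in first-order form
  have hode' : ∀ x ∈ Set.Ici R, w2 x = (b / 2) * v x + η x := by
    intro x hx
    have h2 : iteratedDerivWithin 2 w (Set.Ici R) x = w2 x := by
      rw [iteratedDerivWithin_succ]
      apply derivWithin_congr
      · intro y hy; exact congrFun iteratedDerivWithin_one y
      · exact congrFun iteratedDerivWithin_one x
    have h3 := hode x hx
    rw [h2] at h3
    have hv : v x = x * w1 x - w x := rfl
    linarith
  -- pointwise derivatives on the open ray
  have hwd : ∀ x ∈ Set.Ioi R, HasDerivAt w (w1 x) x := fun x hx =>
    ((hw.differentiableOn (by norm_num) x (Set.mem_Ici.mpr (le_of_lt hx))).hasDerivWithinAt).hasDerivAt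
      (Ici_mem_nhds hx)
  have hw1d : ∀ x ∈ Set.Ioi R, HasDerivAt w1 (w2 x) x := fun x hx =>
    ((hw1c.differentiableOn one_ne_zero x (Set.mem_Ici.mpr (le_of_lt hx))).hasDerivWithinAt).hasDerivAt
      (Ici_mem_nhds hx)
  have hvd : ∀ x ∈ Set.Ioi R, HasDerivAt v (x * ((b / 2) * v x + η x)) x := by
    intro x hx
    have h := ((hasDerivAt_id x).mul (hw1d x hx)).sub (hwd x hx)
    simp only [id_eq] at h
    have heq : 1 * w1 x + x * w2 x - w1 x = x * ((b / 2) * v x + η x) := by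
      rw [hode' x (Set.mem_Ici.mpr (le_of_lt hx))]; ring
    rw [heq] at h
    exact h
  -- continuity of v on [R,∞)
  have hvc : ContinuousOn v (Set.Ici R) :=
    (continuousOn_id.mul hw1c.continuousOn).sub hw.continuousOn
  have hv0 : Filter.Tendsto v Filter.atTop (nhds 0) := hlim2
  -- bounds
  obtain ⟨Cη, hCη0, hCη⟩ := exists_bound_of_tendsto_aux hηc hη0
  obtain ⟨Cv, hCv0, hCv⟩ := exists_bound_of_tendsto_aux hvc hv0
  -- the auxiliary function g1
  set g1 : ℝ → ℝ := fun ξ => Real.exp (-(b / 4) * ξ ^ 2) * v ξ with hg1def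
  have hg1d : ∀ ξ ∈ Set.Ioi R,
      HasDerivAt g1 (ξ * Real.exp (-(b / 4) * ξ ^ 2) * η ξ) ξ := by
    intro ξ hξ
    have hexp : HasDerivAt (fun t : ℝ => Real.exp (-(b / 4) * t ^ 2))
        (Real.exp (-(b / 4) * ξ ^ 2) * (-(b / 4) * (2 * ξ ^ 1))) ξ :=
      (((hasDerivAt_pow 2 ξ).const_mul (-(b / 4)))).exp
    have h := hexp.mul (hvd ξ hξ)
    have heq : Real.exp (-(b / 4) * ξ ^ 2) * (-(b / 4) * (2 * ξ ^ 1)) * v ξ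
        + Real.exp (-(b / 4) * ξ ^ 2) * (ξ * ((b / 2) * v ξ + η ξ))
        = ξ * Real.exp (-(b / 4) * ξ ^ 2) * η ξ := by ring
    rw [heq] at h
    exact h
  have hg1c : ContinuousOn g1 (Set.Ici R) :=
    ((Real.continuous_exp.comp (by continuity)).continuousOn).mul hvc
  have hg1lim : Filter.Tendsto g1 Filter.atTop (nhds 0) := by
    have hexp0 : Filter.Tendsto (fun ξ : ℝ => Real.exp (-(b / 4) * ξ ^ 2))
        Filter.atTop (nhds 0) := by
      apply Real.tendsto_exp_atBot.comp
      have h1 : Filter.Tendsto (fun ξ : ℝ => (b / 4) * ξ ^ 2) Filter.atTop Filter.atTop :=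
        (tendsto_pow_atTop two_ne_zero).const_mul_atTop (by positivity)
      have : (fun ξ : ℝ => -(b / 4) * ξ ^ 2) = fun ξ => -((b / 4) * ξ ^ 2) := by
        funext ξ; ring
      rw [this]
      exact tendsto_neg_atBot_iff.mpr h1
    simpa only [zero_mul] using hexp0.mul hv0
  -- integrability of the inner integrand
  have hinnerint : ∀ x ∈ Set.Ici R,
      IntegrableOn (fun ξ => ξ * Real.exp (-(b / 4) * ξ ^ 2) * η ξ) (Set.Ioi x) := by
    intro x hx
    have hx0 : 0 < x := lt_of_lt_of_le hR hx
    apply Integrable.mono'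
      (g := fun ξ => Cη * (ξ * Real.exp (-(b / 4) * ξ ^ 2)))
      (((integrable_mul_exp_neg_mul_sq (by positivity : (0:ℝ) < b / 4)).const_mul
        Cη).integrableOn)
    · apply ContinuousOn.aestronglyMeasurable _ measurableSet_Ioi
      apply ContinuousOn.mul _ (hηc.mono (fun y hy => Set.mem_Ici.mpr (le_trans (Set.mem_Ici.mp hx) (le_of_lt (Set.mem_Ioi.mp hy)))))
      exact (continuousOn_id.mul ((Real.continuous_exp.comp (by continuity)).continuousOn))
    · refine (ae_restrict_iff' measurableSet_Ioi).2 (Filter.Eventually.of_forall ?_)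
      intro ξ hξ
      have hξ0 : 0 < ξ := lt_trans hx0 hξ
      have hexp0 : 0 < Real.exp (-(b / 4) * ξ ^ 2) := Real.exp_pos _
      have : |ξ * Real.exp (-(b / 4) * ξ ^ 2) * η ξ|
          = (ξ * Real.exp (-(b / 4) * ξ ^ 2)) * |η ξ| := by
        rw [abs_mul, abs_of_pos (by positivity)]
      rw [Real.norm_eq_abs, this]
      calc (ξ * Real.exp (-(b / 4) * ξ ^ 2)) * |η ξ|
          ≤ (ξ * Real.exp (-(b / 4) * ξ ^ 2)) * Cη := by
            apply mul_le_mul_of_nonneg_left (hCη ξ (Set.mem_Ici.mpr (le_trans (Set.mem_Ici.mp hx) (le_of_lt (Set.mem_Ioi.mp hξ)))))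
            positivity
        _ = Cη * (ξ * Real.exp (-(b / 4) * ξ ^ 2)) := by ring
  -- the inner integral equals -v x
  have hinner : ∀ x ∈ Set.Ici R,
      (∫ ξ in Set.Ioi x, ξ * Real.exp (-(b / 4) * (ξ ^ 2 - x ^ 2)) * η ξ) = -v x := by
    intro x hx
    have key : (∫ ξ in Set.Ioi x, ξ * Real.exp (-(b / 4) * ξ ^ 2) * η ξ) = 0 - g1 x :=
      integral_Ioi_of_hasDerivAt_of_tendsto
        ((hg1c.mono (Ici_subset_Ici.mpr hx)) x self_mem_Ici)
        (fun ξ hξ => hg1d ξ (Set.mem_Ioi.mpr (lt_of_le_of_lt (Set.mem_Ici.mp hx) (Set.mem_Ioi.mp hξ))))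
        (hinnerint x hx) hg1lim
    have hfun : (fun ξ => ξ * Real.exp (-(b / 4) * (ξ ^ 2 - x ^ 2)) * η ξ)
        = fun ξ => Real.exp ((b / 4) * x ^ 2) * (ξ * Real.exp (-(b / 4) * ξ ^ 2) * η ξ) := by
      funext ξ
      rw [show -(b / 4) * (ξ ^ 2 - x ^ 2) = (b / 4) * x ^ 2 + -(b / 4) * ξ ^ 2 by ring,
        Real.exp_add]
      ring
    rw [hfun, MeasureTheory.integral_const_mul, key, zero_sub, hg1def]
    simp only
    rw [mul_neg, ← mul_assoc, ← Real.exp_add,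
      show b / 4 * x ^ 2 + -(b / 4) * x ^ 2 = 0 by ring, Real.exp_zero, one_mul]
  -- now the outer integration
  intro s hs
  have hs0 : 0 < s := lt_of_lt_of_le hR hs
  have houter : (∫ x in Set.Ioi s, v x / x ^ 2) = 0 - w s / s := by
    apply integral_Ioi_of_hasDerivAt_of_tendsto
    · exact ((hw.continuousOn.mono (Ici_subset_Ici.mpr hs)) s self_mem_Ici).div
        continuousWithinAt_id (ne_of_gt hs0)
    · intro x hx
      have hx0 : 0 < x := lt_trans hs0 hx
      have h := (hwd x (Set.mem_Ioi.mpr (lt_of_le_of_lt (Set.mem_Ici.mp hs) (Set.mem_Ioi.mp hx)))).div (hasDerivAt_id x) (ne_of_gt hx0)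
      simp only [id_eq] at h
      have heq : (w1 x * x - w x * 1) / x ^ 2 = v x / x ^ 2 := by
        rw [hvdef]; ring_nf
      rw [heq] at h
      exact h
    · -- integrability of v / x^2
      apply Integrable.mono' (g := fun x => Cv * x ^ (-(2:ℝ)))
        (((integrableOn_Ioi_rpow_of_lt (by norm_num : (-(2:ℝ)) < -1) hs0).const_mul Cv))
      · apply ContinuousOn.aestronglyMeasurable _ measurableSet_Ioi
        apply ContinuousOn.div (hvc.mono (fun y hy => Set.mem_Ici.mpr (le_trans (Set.mem_Ici.mp hs) (le_of_lt (Set.mem_Ioi.mp hy)))))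
          (continuousOn_pow 2)
        intro y hy
        have : (0:ℝ) < y := lt_trans hs0 hy
        positivity
      · refine (ae_restrict_iff' measurableSet_Ioi).2 (Filter.Eventually.of_forall ?_)
        intro x hx
        have hx0 : 0 < x := lt_trans hs0 hx
        have hrp : x ^ (-(2:ℝ)) = (x ^ 2)⁻¹ := by
          rw [Real.rpow_neg hx0.le, show ((2:ℝ) = ((2:ℕ):ℝ)) by norm_num,
            Real.rpow_natCast]
        rw [Real.norm_eq_abs, abs_div, abs_of_pos (by positivity : (0:ℝ) < x ^ 2), hrp,
          div_eq_mul_inv]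
        apply mul_le_mul_of_nonneg_right (hCv x (Set.mem_Ici.mpr (le_trans (Set.mem_Ici.mp hs) (le_of_lt (Set.mem_Ioi.mp hx)))))
        positivity
    · exact hlim1
  have hcongr : (∫ x in Set.Ioi s, (x ^ 2)⁻¹ *
        ∫ ξ in Set.Ioi x, ξ * Real.exp (-(b / 4) * (ξ ^ 2 - x ^ 2)) * η ξ)
      = ∫ x in Set.Ioi s, -(v x / x ^ 2) := by
    apply setIntegral_congr_fun measurableSet_Ioi
    intro x hx
    have hxR : x ∈ Set.Ici R := Set.mem_Ici.mpr (le_trans (Set.mem_Ici.mp hs) (le_of_lt (Set.mem_Ioi.mp hx)))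
    simp only
    rw [hinner x hxR]
    field_simp
  rw [hcongr, MeasureTheory.integral_neg, houter]
  field_simp
  ring
end

section
/- Let b > 0, R > 0, and let η : [R,∞) → ℝ be continuous with η(s) → 0 as s → ∞. Define w(s) = s ∫_s^∞ x^{−2} ( ∫_x^∞ ξ exp(−(b/4)(ξ² − x²)) η(ξ) dξ ) dx. Then w is well defined and of class C² on [R,∞), its derivatives are given by w'(s) = ∫_s^∞ x^{−2} ( ∫_x^∞ ξ exp(−(b/4)(ξ² − x²)) η(ξ) dξ ) dx − (1/s) ∫_s^∞ ξ exp(−(b/4)(ξ² − s²)) η(ξ) dξ and w''(s) = η(s) − (b/2) ∫_s^∞ ξ exp(−(b/4)(ξ² − s²)) η(ξ) dξ, and w satisfies w''(s) − (b/2)(s w'(s) − w(s)) = η(s) on [R,∞) together with w(s)/s → 0 and s w'(s) − w(s) → 0 as s → ∞. -/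
open Set Filter MeasureTheory

/-- The representation formula for the solution of `w'' - (b/2)(s w' - w) = η`. -/
noncomputable def wrep (b : ℝ) (η : ℝ → ℝ) (s : ℝ) : ℝ :=
  s * ∫ x in Set.Ioi s, (x ^ 2)⁻¹ *
    ∫ ξ in Set.Ioi x, ξ * Real.exp (-(b / 4) * (ξ ^ 2 - x ^ 2)) * η ξ

lemma expderiv (b : ℝ) (hb : 0 < b) (x : ℝ) :
    HasDerivAt (fun ξ : ℝ => -(2/b) * Real.exp (-(b/4) * ξ^2))
      (x * Real.exp (-(b/4) * x^2)) x := by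
  have h1 : HasDerivAt (fun ξ : ℝ => -(b/4) * ξ^2) (-(b/4) * (2*x)) x := by
    simpa using (hasDerivAt_pow 2 x).const_mul (-(b/4))
  have h2 := (h1.exp).const_mul (-(2/b))
  refine h2.congr_deriv ?_
  field_simp
  ring

lemma exptendsto (b : ℝ) (hb : 0 < b) :
    Tendsto (fun ξ : ℝ => -(2/b) * Real.exp (-(b/4) * ξ^2)) atTop (nhds 0) := by
  have h : Tendsto (fun ξ : ℝ => -(b/4) * ξ^2) atTop atBot := by
    apply Tendsto.const_mul_atTop_of_neg (by linarith : -(b/4) < 0)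
    exact tendsto_pow_atTop (by norm_num)
  simpa using ((Real.tendsto_exp_atBot.comp h).const_mul (-(2/b)))

lemma expint_integrable (b : ℝ) (hb : 0 < b) (a : ℝ) (ha : 0 ≤ a) :
    IntegrableOn (fun ξ : ℝ => ξ * Real.exp (-(b/4) * ξ^2)) (Ioi a) :=
  integrableOn_Ioi_deriv_of_nonneg' (fun x _ => expderiv b hb x)
    (fun x hx => mul_nonneg (le_trans ha (le_of_lt hx)) (Real.exp_pos _).le)
    (exptendsto b hb)

lemma expint_eq (b : ℝ) (hb : 0 < b) (a : ℝ) (ha : 0 ≤ a) :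
    ∫ ξ in Ioi a, ξ * Real.exp (-(b/4) * ξ^2) = (2/b) * Real.exp (-(b/4) * a^2) := by
  rw [integral_Ioi_of_hasDerivAt_of_tendsto' (fun x _ => expderiv b hb x)
    (expint_integrable b hb a ha) (exptendsto b hb)]
  ring

lemma invsq_integrable (a : ℝ) (ha : 0 < a) :
    IntegrableOn (fun x : ℝ => (x^2)⁻¹) (Ioi a) := by
  refine integrableOn_Ioi_deriv_of_nonneg' (g := fun x => -x⁻¹) (l := 0) (fun x hx => ?_)
    (fun x hx => by positivity) ?_
  · have := (hasDerivAt_inv (by linarith [hx.out] : x ≠ 0)).neg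
    simpa [Pi.neg_def] using this
  · simpa using (tendsto_inv_atTop_zero (𝕜 := ℝ)).neg


-- generic tail lemmas
lemma tail_eq {f : ℝ → ℝ} {R : ℝ} (hfi : IntegrableOn f (Ioi R)) {s : ℝ} (hs : R ≤ s) :
    (∫ x in Ioi R, f x) - ∫ x in R..s, f x = ∫ x in Ioi s, f x := by
  rw [intervalIntegral.integral_of_le hs]
  have hsplit : (∫ x in Ioc R s, f x) + ∫ x in Ioi s, f x = ∫ x in Ioi R, f x := by
    rw [← setIntegral_union (Ioc_disjoint_Ioi le_rfl) measurableSet_Ioi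
      (hfi.mono Ioc_subset_Ioi_self le_rfl) (hfi.mono (Ioi_subset_Ioi hs) le_rfl),
      Ioc_union_Ioi_eq_Ioi hs]
  linarith

lemma tail_tendsto {f : ℝ → ℝ} {R : ℝ} (hfi : IntegrableOn f (Ioi R)) :
    Tendsto (fun s => ∫ x in Ioi s, f x) atTop (nhds 0) := by
  have h := intervalIntegral_tendsto_integral_Ioi R hfi tendsto_id
  have h2 : Tendsto (fun s => (∫ x in Ioi R, f x) - ∫ x in R..s, f x) atTop
      (nhds ((∫ x in Ioi R, f x) - ∫ x in Ioi R, f x)) := (tendsto_const_nhds).sub h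
  rw [sub_self] at h2
  refine h2.congr' ?_
  filter_upwards [Filter.eventually_ge_atTop R] with s hs
  exact tail_eq hfi hs

set_option maxHeartbeats 1000000 in
lemma tail_hasDeriv {f : ℝ → ℝ} {R : ℝ} (hfc : ContinuousOn f (Ici R))
    (hfi : IntegrableOn f (Ioi R)) {s : ℝ} (hs : s ∈ Ici R) :
    HasDerivWithinAt (fun u => ∫ x in Ioi u, f x) (-f s) (Ici R) s := by
  have haesm : AEStronglyMeasurable f (volume.restrict (Ici R)) :=
    hfc.aestronglyMeasurable measurableSet_Ici
  have hii : ∀ u : ℝ, R ≤ u → IntervalIntegrable f volume R u := fun u hu =>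
    (intervalIntegrable_iff_integrableOn_Ioc_of_le hu).mpr
      (hfi.mono Ioc_subset_Ioi_self le_rfl)
  have hbase : HasDerivWithinAt (fun u => (∫ x in Ioi R, f x) - ∫ x in R..u, f x)
      (-f s) (Ici R) s := by
    rcases eq_or_lt_of_le hs.out with heq | hlt
    · subst heq
      have hm : StronglyMeasurableAtFilter f (nhdsWithin R (Ioi R)) :=
        ⟨Ici R, Filter.mem_of_superset self_mem_nhdsWithin Ioi_subset_Ici_self, haesm⟩
      have h := intervalIntegral.integral_hasDerivWithinAt_right (s := Ici R) (t := Ioi R)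
        (hii R le_rfl) hm ((hfc R (self_mem_Ici)).mono Ioi_subset_Ici_self)
      simpa [Pi.sub_def] using (hasDerivWithinAt_const R (Ici R) (∫ x in Ioi R, f x)).sub h
    · have hm : StronglyMeasurableAtFilter f (nhds s) := ⟨Ici R, Ici_mem_nhds hlt, haesm⟩
      have h := intervalIntegral.integral_hasDerivAt_right (hii s hs.out) hm
        (hfc.continuousAt (Ici_mem_nhds hlt))
      simpa [Pi.sub_def] using ((hasDerivAt_const s (∫ x in Ioi R, f x)).sub h).hasDerivWithinAt
  exact hbase.congr (fun u hu => (tail_eq hfi hu.out).symm) (tail_eq hfi hs.out).symm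


noncomputable def Gg (b : ℝ) (η : ℝ → ℝ) (x : ℝ) : ℝ :=
  ∫ ξ in Ioi x, ξ * Real.exp (-(b / 4) * (ξ ^ 2 - x ^ 2)) * η ξ

noncomputable def Hh (b : ℝ) (η : ℝ → ℝ) (s : ℝ) : ℝ :=
  ∫ x in Ioi s, (x ^ 2)⁻¹ * Gg b η x

noncomputable def Ff (b : ℝ) (η : ℝ → ℝ) (x : ℝ) : ℝ :=
  ∫ ξ in Ioi x, ξ * Real.exp (-(b / 4) * ξ ^ 2) * η ξ

lemma G_eq (b : ℝ) (η : ℝ → ℝ) (x : ℝ) :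
    Gg b η x = Real.exp ((b / 4) * x ^ 2) * Ff b η x := by
  rw [Gg, Ff, ← integral_const_mul]
  refine setIntegral_congr_fun measurableSet_Ioi (fun ξ _ => ?_)
  have : -(b / 4) * (ξ ^ 2 - x ^ 2) = (b / 4) * x ^ 2 + (-(b / 4) * ξ ^ 2) := by ring
  rw [this, Real.exp_add]
  ring

section main
variable {b R : ℝ} (hb : 0 < b) (hR : 0 < R) {η : ℝ → ℝ}
  (hηc : ContinuousOn η (Set.Ici R))

-- boundedness of η
include hηc in
lemma eta_bdd (hη0 : Filter.Tendsto η Filter.atTop (nhds 0)) :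
    ∃ M : ℝ, 0 ≤ M ∧ ∀ x ∈ Ici R, |η x| ≤ M := by
  obtain ⟨N, hN⟩ := (Metric.tendsto_atTop.mp hη0) 1 one_pos
  obtain ⟨C, hC⟩ := (isCompact_Icc (a := R) (b := max R N)).exists_bound_of_continuousOn
    (hηc.mono (fun x hx => hx.1))
  refine ⟨max C 1, le_trans zero_le_one (le_max_right _ _), fun x hx => ?_⟩
  rcases le_or_gt x (max R N) with h | h
  · have h2 := hC x ⟨hx.out, h⟩
    rw [Real.norm_eq_abs] at h2
    exact le_trans h2 (le_max_left _ _)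
  · have := hN x (le_trans (le_max_right R N) h.le)
    rw [Real.dist_eq, sub_zero] at this
    exact le_trans this.le (le_max_right _ _)

-- continuity of the F-integrand
include hηc in
lemma fint_cont : ContinuousOn (fun ξ => ξ * Real.exp (-(b / 4) * ξ ^ 2) * η ξ) (Ici R) := by
  exact (continuousOn_id.mul ((Real.continuous_exp.comp (by continuity)).continuousOn)).mul hηc

include hb hR hηc in
lemma fint_integrable {M : ℝ} (hM : 0 ≤ M) (hMb : ∀ x ∈ Ici R, |η x| ≤ M)
    {x : ℝ} (hx : x ∈ Ici R) :
    IntegrableOn (fun ξ => ξ * Real.exp (-(b / 4) * ξ ^ 2) * η ξ) (Ioi x) := by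
  have hx0 : 0 < x := lt_of_lt_of_le hR hx.out
  refine Integrable.mono' (((expint_integrable b hb x hx0.le)).const_mul M)
    ((fint_cont hηc).aestronglyMeasurable (measurableSet_Ici) |>.mono_measure
      (Measure.restrict_mono (Ioi_subset_Ici hx.out) le_rfl)) ?_
  refine (ae_restrict_iff' measurableSet_Ioi).mpr (Filter.Eventually.of_forall fun ξ hξ => ?_)
  have hξ0 : 0 < ξ := lt_trans hx0 hξ.out
  have hηξ : |η ξ| ≤ M := hMb ξ (le_trans hx.out hξ.out.le)
  have : ‖ξ * Real.exp (-(b / 4) * ξ ^ 2) * η ξ‖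
      = ξ * Real.exp (-(b / 4) * ξ ^ 2) * |η ξ| := by
    rw [Real.norm_eq_abs, abs_mul, abs_mul, abs_of_pos hξ0, abs_of_pos (Real.exp_pos _)]
  rw [this]
  calc ξ * Real.exp (-(b / 4) * ξ ^ 2) * |η ξ|
      ≤ ξ * Real.exp (-(b / 4) * ξ ^ 2) * M := by
        exact mul_le_mul_of_nonneg_left hηξ (by positivity)
    _ = M * (ξ * Real.exp (-(b / 4) * ξ ^ 2)) := by ring

include hb hR hηc in
lemma gint_integrable {M : ℝ} (hM : 0 ≤ M) (hMb : ∀ x ∈ Ici R, |η x| ≤ M)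
    {x : ℝ} (hx : x ∈ Ici R) :
    IntegrableOn (fun ξ => ξ * Real.exp (-(b / 4) * (ξ ^ 2 - x ^ 2)) * η ξ) (Ioi x) := by
  have h : IntegrableOn
      (fun ξ => Real.exp ((b / 4) * x ^ 2) * (ξ * Real.exp (-(b / 4) * ξ ^ 2) * η ξ)) (Ioi x) :=
    ((fint_integrable hb hR hηc hM hMb hx).const_mul (Real.exp ((b / 4) * x ^ 2)))
  refine IntegrableOn.congr_fun h (fun ξ _ => ?_) measurableSet_Ioi
  have : -(b / 4) * (ξ ^ 2 - x ^ 2) = (b / 4) * x ^ 2 + (-(b / 4) * ξ ^ 2) := by ring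
  rw [this, Real.exp_add]; ring

include hb hR hηc in
lemma G_bound {K X : ℝ} (hK : 0 ≤ K) (hX : R ≤ X) (hKb : ∀ ξ ∈ Ici X, |η ξ| ≤ K)
    {s : ℝ} (hs : X ≤ s) : |Gg b η s| ≤ K * (2 / b) := by
  have hs0 : 0 < s := lt_of_lt_of_le hR (le_trans hX hs)
  have hsR : s ∈ Ici R := le_trans hX hs
  have hbint : IntegrableOn
      (fun ξ : ℝ => K * Real.exp ((b / 4) * s ^ 2) * (ξ * Real.exp (-(b / 4) * ξ ^ 2)))
      (Ioi s) := (expint_integrable b hb s hs0.le).const_mul _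
  have hnorm : ‖∫ ξ in Ioi s, ξ * Real.exp (-(b / 4) * (ξ ^ 2 - s ^ 2)) * η ξ‖
      ≤ ∫ ξ in Ioi s, K * Real.exp ((b / 4) * s ^ 2) * (ξ * Real.exp (-(b / 4) * ξ ^ 2)) := by
    refine norm_integral_le_of_norm_le hbint
      ((ae_restrict_iff' measurableSet_Ioi).mpr (Filter.Eventually.of_forall fun ξ hξ => ?_))
    have hξ0 : 0 < ξ := lt_trans hs0 hξ.out
    have hsplit : -(b / 4) * (ξ ^ 2 - s ^ 2) = (b / 4) * s ^ 2 + (-(b / 4) * ξ ^ 2) := by ring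
    have hηξ : |η ξ| ≤ K := hKb ξ (le_trans hs hξ.out.le)
    rw [Real.norm_eq_abs, abs_mul, abs_mul, abs_of_pos hξ0, abs_of_pos (Real.exp_pos _),
      hsplit, Real.exp_add]
    calc ξ * (Real.exp ((b / 4) * s ^ 2) * Real.exp (-(b / 4) * ξ ^ 2)) * |η ξ|
        ≤ ξ * (Real.exp ((b / 4) * s ^ 2) * Real.exp (-(b / 4) * ξ ^ 2)) * K :=
          mul_le_mul_of_nonneg_left hηξ (by positivity)
      _ = K * Real.exp ((b / 4) * s ^ 2) * (ξ * Real.exp (-(b / 4) * ξ ^ 2)) := by ring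
  have hval : ∫ ξ in Ioi s, K * Real.exp ((b / 4) * s ^ 2) * (ξ * Real.exp (-(b / 4) * ξ ^ 2))
      = K * (2 / b) := by
    rw [integral_const_mul, expint_eq b hb s hs0.le]
    have hone : Real.exp ((b / 4) * s ^ 2) * Real.exp (-(b / 4) * s ^ 2) = 1 := by
      rw [← Real.exp_add, show (b / 4) * s ^ 2 + -(b / 4) * s ^ 2 = 0 by ring, Real.exp_zero]
    calc K * Real.exp ((b / 4) * s ^ 2) * (2 / b * Real.exp (-(b / 4) * s ^ 2))
        = K * (2 / b) * (Real.exp ((b / 4) * s ^ 2) * Real.exp (-(b / 4) * s ^ 2)) := by ring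
      _ = K * (2 / b) := by rw [hone, mul_one]
  rw [Gg, ← Real.norm_eq_abs]
  exact hnorm.trans_eq hval

include hb hR hηc in
lemma G_tendsto (hη0 : Filter.Tendsto η Filter.atTop (nhds 0)) :
    Tendsto (Gg b η) atTop (nhds 0) := by
  rw [Metric.tendsto_atTop]
  intro ε hε
  have hε' : 0 < ε * b / 8 := by positivity
  obtain ⟨N, hN⟩ := (Metric.tendsto_atTop.mp hη0) (ε * b / 8) hε'
  refine ⟨max R N, fun s hs => ?_⟩
  have hb1 : ∀ ξ ∈ Ici (max R N), |η ξ| ≤ ε * b / 8 := by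
    intro ξ hξ
    have h2 := hN ξ (le_trans (le_max_right R N) hξ.out)
    rw [Real.dist_eq, sub_zero] at h2
    exact h2.le
  have := G_bound hb hR hηc hε'.le (le_max_left R N) hb1 hs
  rw [Real.dist_eq, sub_zero]
  calc |Gg b η s| ≤ ε * b / 8 * (2 / b) := this
    _ = ε / 4 := by field_simp; ring
    _ < ε := by linarith

include hb hR hηc in
lemma F_hasDeriv {M : ℝ} (hM : 0 ≤ M) (hMb : ∀ x ∈ Ici R, |η x| ≤ M)
    {s : ℝ} (hs : s ∈ Ici R) :
    HasDerivWithinAt (Ff b η) (-(s * Real.exp (-(b / 4) * s ^ 2) * η s)) (Ici R) s :=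
  tail_hasDeriv (fint_cont hηc) (fint_integrable hb hR hηc hM hMb self_mem_Ici) hs

include hb hR hηc in
lemma G_hasDeriv {M : ℝ} (hM : 0 ≤ M) (hMb : ∀ x ∈ Ici R, |η x| ≤ M)
    {s : ℝ} (hs : s ∈ Ici R) :
    HasDerivWithinAt (Gg b η) ((b / 2) * s * Gg b η s - s * η s) (Ici R) s := by
  have he : HasDerivAt (fun x : ℝ => Real.exp ((b / 4) * x ^ 2))
      (Real.exp ((b / 4) * s ^ 2) * ((b / 4) * (2 * s))) s := by
    have h1 : HasDerivAt (fun x : ℝ => (b / 4) * x ^ 2) ((b / 4) * (2 * s)) s := by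
      simpa using (hasDerivAt_pow 2 s).const_mul (b / 4)
    exact h1.exp
  have hmul := he.hasDerivWithinAt.mul (F_hasDeriv hb hR hηc hM hMb hs)
  have hone : Real.exp ((b / 4) * s ^ 2) * Real.exp (-(b / 4) * s ^ 2) = 1 := by
    rw [← Real.exp_add, show (b / 4) * s ^ 2 + -(b / 4) * s ^ 2 = 0 by ring, Real.exp_zero]
  have hval : Real.exp ((b / 4) * s ^ 2) * ((b / 4) * (2 * s)) * Ff b η s
      + Real.exp ((b / 4) * s ^ 2) * -(s * Real.exp (-(b / 4) * s ^ 2) * η s)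
      = (b / 2) * s * Gg b η s - s * η s := by
    rw [G_eq b η s]
    calc Real.exp ((b / 4) * s ^ 2) * ((b / 4) * (2 * s)) * Ff b η s
        + Real.exp ((b / 4) * s ^ 2) * -(s * Real.exp (-(b / 4) * s ^ 2) * η s)
        = (b / 2) * s * (Real.exp ((b / 4) * s ^ 2) * Ff b η s)
          - s * η s * (Real.exp ((b / 4) * s ^ 2) * Real.exp (-(b / 4) * s ^ 2)) := by ring
      _ = _ := by rw [hone, mul_one]
  rw [← hval]
  exact hmul.congr (fun u _ => G_eq b η u) (G_eq b η s)

include hb hR hηc in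
lemma G_cont {M : ℝ} (hM : 0 ≤ M) (hMb : ∀ x ∈ Ici R, |η x| ≤ M) :
    ContinuousOn (Gg b η) (Ici R) :=
  fun s hs => (G_hasDeriv hb hR hηc hM hMb hs).continuousWithinAt

include hb hR hηc in
lemma hint_cont {M : ℝ} (hM : 0 ≤ M) (hMb : ∀ x ∈ Ici R, |η x| ≤ M) :
    ContinuousOn (fun x => (x ^ 2)⁻¹ * Gg b η x) (Ici R) := by
  refine ContinuousOn.mul (ContinuousOn.inv₀ (by fun_prop) fun x hx => ?_)
    (G_cont hb hR hηc hM hMb)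
  have : 0 < x := lt_of_lt_of_le hR hx.out
  positivity

include hb hR hηc in
lemma hint_integrable {M : ℝ} (hM : 0 ≤ M) (hMb : ∀ x ∈ Ici R, |η x| ≤ M)
    {s : ℝ} (hs : s ∈ Ici R) :
    IntegrableOn (fun x => (x ^ 2)⁻¹ * Gg b η x) (Ioi s) := by
  have hs0 : 0 < s := lt_of_lt_of_le hR hs.out
  refine Integrable.mono' ((invsq_integrable s hs0).mul_const (M * (2 / b)))
    ((hint_cont hb hR hηc hM hMb).aestronglyMeasurable measurableSet_Ici |>.mono_measure
      (Measure.restrict_mono (Ioi_subset_Ici hs.out) le_rfl)) ?_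
  refine (ae_restrict_iff' measurableSet_Ioi).mpr (Filter.Eventually.of_forall fun x hx => ?_)
  have hx0 : 0 < x := lt_trans hs0 hx.out
  have hGx : |Gg b η x| ≤ M * (2 / b) :=
    G_bound hb hR hηc hM le_rfl hMb (le_trans hs.out hx.out.le)
  rw [Real.norm_eq_abs, abs_mul, abs_of_pos (by positivity : (0:ℝ) < (x ^ 2)⁻¹)]
  exact mul_le_mul_of_nonneg_left hGx (by positivity)

include hb hR hηc in
lemma H_hasDeriv {M : ℝ} (hM : 0 ≤ M) (hMb : ∀ x ∈ Ici R, |η x| ≤ M)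
    {s : ℝ} (hs : s ∈ Ici R) :
    HasDerivWithinAt (Hh b η) (-((s ^ 2)⁻¹ * Gg b η s)) (Ici R) s :=
  tail_hasDeriv (hint_cont hb hR hηc hM hMb)
    (hint_integrable hb hR hηc hM hMb self_mem_Ici) hs

end main

/-- The function defined by the representation formula is well defined and
of class `C²` on `[R,∞)`, its first and second derivatives are given by explicit formulas,
it solves `w'' - (b/2)(s w' - w) = η` on `[R,∞)`, and it satisfies `w/s → 0` and
`s w' - w → 0` at infinity. -/
theorem representation_formula_solves
    (b R : ℝ) (hb : 0 < b) (hR : 0 < R) (η : ℝ → ℝ)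
    (hηc : ContinuousOn η (Set.Ici R))
    (hη0 : Filter.Tendsto η Filter.atTop (nhds 0)) :
    (∀ x ∈ Set.Ici R,
      IntegrableOn (fun ξ => ξ * Real.exp (-(b / 4) * (ξ ^ 2 - x ^ 2)) * η ξ) (Set.Ioi x)) ∧
    (∀ s ∈ Set.Ici R,
      IntegrableOn (fun x => (x ^ 2)⁻¹ *
        ∫ ξ in Set.Ioi x, ξ * Real.exp (-(b / 4) * (ξ ^ 2 - x ^ 2)) * η ξ) (Set.Ioi s)) ∧
    ContDiffOn ℝ 2 (wrep b η) (Set.Ici R) ∧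
    (∀ s ∈ Set.Ici R,
      derivWithin (wrep b η) (Set.Ici R) s
        = (∫ x in Set.Ioi s, (x ^ 2)⁻¹ *
            ∫ ξ in Set.Ioi x, ξ * Real.exp (-(b / 4) * (ξ ^ 2 - x ^ 2)) * η ξ)
          - s⁻¹ * ∫ ξ in Set.Ioi s, ξ * Real.exp (-(b / 4) * (ξ ^ 2 - s ^ 2)) * η ξ) ∧
    (∀ s ∈ Set.Ici R,
      iteratedDerivWithin 2 (wrep b η) (Set.Ici R) s
        = η s - (b / 2) * ∫ ξ in Set.Ioi s, ξ * Real.exp (-(b / 4) * (ξ ^ 2 - s ^ 2)) * η ξ) ∧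
    (∀ s ∈ Set.Ici R,
      iteratedDerivWithin 2 (wrep b η) (Set.Ici R) s
        - (b / 2) * (s * derivWithin (wrep b η) (Set.Ici R) s - wrep b η s) = η s) ∧
    Filter.Tendsto (fun s => wrep b η s / s) Filter.atTop (nhds 0) ∧
    Filter.Tendsto (fun s => s * derivWithin (wrep b η) (Set.Ici R) s - wrep b η s)
      Filter.atTop (nhds 0) := by
  obtain ⟨M, hM, hMb⟩ := eta_bdd hηc hη0
  have hU : UniqueDiffOn ℝ (Set.Ici R) := uniqueDiffOn_Ici R
  have hwdef : wrep b η = fun s => s * Hh b η s := rfl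
  -- derivative of w
  have hWderiv : ∀ s ∈ Ici R,
      HasDerivWithinAt (wrep b η) (Hh b η s - s⁻¹ * Gg b η s) (Ici R) s := by
    intro s hs
    have hs0 : s ≠ 0 := (lt_of_lt_of_le hR hs.out).ne'
    have h := (hasDerivAt_id s).hasDerivWithinAt.mul (H_hasDeriv hb hR hηc hM hMb hs)
    rw [hwdef]
    refine h.congr_deriv ?_
    simp only [id]
    field_simp
    ring
  have hdW : ∀ s ∈ Ici R,
      derivWithin (wrep b η) (Ici R) s = Hh b η s - s⁻¹ * Gg b η s :=
    fun s hs => (hWderiv s hs).derivWithin (hU s hs)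
  -- derivative of w'
  have hW1deriv : ∀ s ∈ Ici R,
      HasDerivWithinAt (fun u => Hh b η u - u⁻¹ * Gg b η u)
        (η s - (b / 2) * Gg b η s) (Ici R) s := by
    intro s hs
    have hs0 : s ≠ 0 := (lt_of_lt_of_le hR hs.out).ne'
    have h2 := (hasDerivAt_inv hs0).hasDerivWithinAt.mul (G_hasDeriv hb hR hηc hM hMb hs)
    have h := (H_hasDeriv hb hR hηc hM hMb hs).sub h2
    refine h.congr_deriv ?_
    field_simp
    ring
  have hd2 : ∀ s ∈ Ici R,
      iteratedDerivWithin 2 (wrep b η) (Ici R) s = η s - (b / 2) * Gg b η s := by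
    intro s hs
    rw [iteratedDerivWithin_succ,
      iteratedDerivWithin_one,
      derivWithin_congr hdW (hdW s hs)]
    exact (hW1deriv s hs).derivWithin (hU s hs)
  refine ⟨fun x hx => gint_integrable hb hR hηc hM hMb hx,
    fun s hs => hint_integrable hb hR hηc hM hMb hs, ?_, fun s hs => hdW s hs, hd2,
    fun s hs => ?_, ?_, ?_⟩
  · -- ContDiffOn
    have h2 : (2 : WithTop ℕ∞) = 1 + 1 := by norm_num
    rw [h2, contDiffOn_succ_iff_derivWithin hU]
    refine ⟨fun s hs => (hWderiv s hs).differentiableWithinAt, by simp, ?_⟩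
    have h1 : (1 : WithTop ℕ∞) = 0 + 1 := by norm_num
    have hc1 : ContDiffOn ℝ 1 (fun u => Hh b η u - u⁻¹ * Gg b η u) (Ici R) := by
      rw [h1, contDiffOn_succ_iff_derivWithin hU]
      refine ⟨fun s hs => (hW1deriv s hs).differentiableWithinAt, by simp, ?_⟩
      rw [contDiffOn_zero]
      have hcont : ContinuousOn (fun u => η u - (b / 2) * Gg b η u) (Ici R) :=
        hηc.sub (continuousOn_const.mul (G_cont hb hR hηc hM hMb))
      exact hcont.congr (fun s hs => (hW1deriv s hs).derivWithin (hU s hs))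
    exact hc1.congr hdW
  · -- the ODE
    rw [hd2 s hs, hdW s hs, hwdef]
    have hs0 : s ≠ 0 := (lt_of_lt_of_le hR hs.out).ne'
    field_simp
    ring
  · -- w/s → 0
    have hH := tail_tendsto (hint_integrable hb hR hηc hM hMb (self_mem_Ici))
    refine hH.congr' ?_
    filter_upwards [Filter.eventually_gt_atTop (max R 0)] with s hs
    have hs0 : s ≠ 0 := (lt_of_le_of_lt (le_max_right R 0) hs).ne'
    rw [hwdef]
    show Hh b η s = s * Hh b η s / s
    field_simp
  · -- s w' - w → 0
    have hG := (G_tendsto hb hR hηc hη0).neg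
    rw [neg_zero] at hG
    refine hG.congr' ?_
    filter_upwards [Filter.eventually_ge_atTop R] with s hs
    have hs0 : s ≠ 0 := (lt_of_lt_of_le hR hs).ne'
    rw [hdW s hs, hwdef]
    show -Gg b η s = s * (Hh b η s - s⁻¹ * Gg b η s) - s * Hh b η s
    field_simp
    ring
end

section
/- Let b > 0, R > 0, γ ≥ 0, and let η : [R,∞) → ℝ be continuous with η(s) → 0 as s → ∞ and sup_{s≥R} s^γ |η(s)| < ∞. Let w(s) = s ∫_s^∞ x^{−2} ( ∫_x^∞ ξ exp(−(b/4)(ξ² − x²)) η(ξ) dξ ) dx be the unique C² solution of w'' − (b/2)(s w' − w) = η with w/s → 0 and s w' − w → 0 at infinity. Then sup_{s≥R} s^γ |w''(s)| ≤ 4 · sup_{s≥R} s^γ |η(s)|. -/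
open Set Filter MeasureTheory


lemma prim_hasDerivWithinAt {R : ℝ} {f : ℝ → ℝ} (hf : ContinuousOn f (Set.Ici R))
    {x : ℝ} (hx : x ∈ Set.Ici R) :
    HasDerivWithinAt (fun u => ∫ t in R..u, f t) (f x) (Set.Ici R) x := by
  have hint : IntervalIntegrable f volume R x :=
    (hf.mono Set.Icc_subset_Ici_self).intervalIntegrable_of_Icc hx
  rcases eq_or_lt_of_le (Set.mem_Ici.mp hx) with rfl | hlt
  · exact intervalIntegral.integral_hasDerivWithinAt_right hint
      ⟨Set.Ioi R, self_mem_nhdsWithin,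
        (hf.mono Set.Ioi_subset_Ici_self).aestronglyMeasurable measurableSet_Ioi⟩
      ((hf R Set.self_mem_Ici).mono Set.Ioi_subset_Ici_self)
  · exact (intervalIntegral.integral_hasDerivAt_right hint
      ⟨Set.Ici R, Ici_mem_nhds hlt, hf.aestronglyMeasurable measurableSet_Ici⟩
      ((hf x hx).continuousAt (Ici_mem_nhds hlt))).hasDerivWithinAt

lemma hasDerivWithinAt_integral_Ioi {R : ℝ} {f : ℝ → ℝ} (hf : ContinuousOn f (Set.Ici R))
    (hint : IntegrableOn f (Set.Ioi R)) {x : ℝ} (hx : x ∈ Set.Ici R) :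
    HasDerivWithinAt (fun u => ∫ t in Set.Ioi u, f t) (-f x) (Set.Ici R) x := by
  have hsplit : ∀ y ∈ Set.Ici R,
      (∫ t in Set.Ioi y, f t) = (∫ t in Set.Ioi R, f t) - ∫ t in R..y, f t := by
    intro y hy
    have h2 : IntegrableOn f (Set.Ioc R y) := hint.mono_set Set.Ioc_subset_Ioi_self
    have h3 : IntegrableOn f (Set.Ioi y) := hint.mono_set (Set.Ioi_subset_Ioi hy)
    have hu := MeasureTheory.setIntegral_union (Set.Ioc_disjoint_Ioi le_rfl)
      measurableSet_Ioi h2 h3 (f := f) (μ := volume)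
    rw [Set.Ioc_union_Ioi_eq_Ioi hy] at hu
    rw [intervalIntegral.integral_of_le hy, hu]
    ring
  have h := (prim_hasDerivWithinAt hf hx).const_sub (∫ t in Set.Ioi R, f t)
  exact h.congr (fun y hy => hsplit y hy) (hsplit x hx)

lemma integral_Ioi_texp {c : ℝ} (hc : 0 < c) (x : ℝ) :
    ∫ ξ in Set.Ioi x, ξ * Real.exp (-(c * ξ ^ 2)) = Real.exp (-(c * x ^ 2)) / (2 * c) := by
  have hint : Integrable fun ξ : ℝ => ξ * Real.exp (-(c * ξ ^ 2)) := by
    simpa [neg_mul] using integrable_mul_exp_neg_mul_sq hc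
  have hderiv : ∀ u : ℝ, HasDerivAt (fun u => -(Real.exp (-(c * u ^ 2)) / (2 * c)))
      (u * Real.exp (-(c * u ^ 2))) u := by
    intro u
    have h1 : HasDerivAt (fun u : ℝ => -(c * u ^ 2)) (-(c * (2 * u))) u := by
      simpa using ((hasDerivAt_pow 2 u).const_mul c).fun_neg
    have h2 := (h1.exp.div_const (2 * c)).fun_neg
    refine h2.congr_deriv ?_
    field_simp
  have htend : Tendsto (fun u : ℝ => -(Real.exp (-(c * u ^ 2)) / (2 * c))) atTop (nhds 0) := by
    have h1 : Tendsto (fun u : ℝ => c * u ^ 2) atTop atTop :=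
      (tendsto_pow_atTop two_ne_zero).const_mul_atTop hc
    have h2 : Tendsto (fun u : ℝ => Real.exp (-(c * u ^ 2))) atTop (nhds 0) :=
      Real.tendsto_exp_atBot.comp (tendsto_neg_atBot_iff.mpr h1)
    simpa using (h2.div_const (2 * c)).neg
  have h := integral_Ioi_of_hasDerivAt_of_tendsto' (a := x)
    (f' := fun ξ => ξ * Real.exp (-(c * ξ ^ 2))) (fun u _ => hderiv u) hint.integrableOn htend
  rw [h]; ring


noncomputable def Gaux (c : ℝ) (η : ℝ → ℝ) (x : ℝ) : ℝ :=
  ∫ ξ in Set.Ioi x, ξ * Real.exp (-(c * ξ ^ 2)) * η ξ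

noncomputable def phiaux (c : ℝ) (η : ℝ → ℝ) (x : ℝ) : ℝ :=
  (x ^ 2)⁻¹ * (Real.exp (c * x ^ 2) * Gaux c η x)

noncomputable def Haux (c : ℝ) (η : ℝ → ℝ) (s : ℝ) : ℝ :=
  ∫ x in Set.Ioi s, phiaux c η x

lemma eta_bound {R γ A : ℝ} (hR : 0 < R) (hγ : 0 ≤ γ) {η : ℝ → ℝ}
    (hA : ∀ s ∈ Set.Ici R, s ^ γ * |η s| ≤ A) {x : ℝ} (hx : R ≤ x) :
    ∀ ξ, x ≤ ξ → |η ξ| ≤ A / x ^ γ := by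
  intro ξ hξ
  have hx0 : 0 < x := lt_of_lt_of_le hR hx
  have h1 : x ^ γ ≤ ξ ^ γ := Real.rpow_le_rpow hx0.le hξ hγ
  have h2 : ξ ^ γ * |η ξ| ≤ A := hA ξ (le_trans hx hξ)
  have hxγ : 0 < x ^ γ := Real.rpow_pos_of_pos hx0 γ
  rw [le_div_iff₀ hxγ]
  nlinarith [abs_nonneg (η ξ)]

lemma Gaux_integrableOn {c R γ A : ℝ} (hc : 0 < c) (hR : 0 < R) (hγ : 0 ≤ γ) (hA0 : 0 ≤ A)
    {η : ℝ → ℝ} (hηc : ContinuousOn η (Set.Ici R))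
    (hA : ∀ s ∈ Set.Ici R, s ^ γ * |η s| ≤ A) {x : ℝ} (hx : R ≤ x) :
    IntegrableOn (fun ξ => ξ * Real.exp (-(c * ξ ^ 2)) * η ξ) (Set.Ioi x) := by
  have hbase : Integrable fun ξ : ℝ => ξ * Real.exp (-(c * ξ ^ 2)) := by
    simpa [neg_mul] using integrable_mul_exp_neg_mul_sq hc
  have hsub : Set.Ioi x ⊆ Set.Ici R := fun y hy => le_trans hx (le_of_lt hy)
  have hmeas : AEStronglyMeasurable (fun ξ => ξ * Real.exp (-(c * ξ ^ 2)) * η ξ)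
      (volume.restrict (Set.Ioi x)) := by
    exact (Continuous.aestronglyMeasurable (by continuity)).restrict.mul
      ((hηc.mono hsub).aestronglyMeasurable measurableSet_Ioi)
  refine Integrable.mono ((hbase.const_mul (A / R ^ γ)).integrableOn) hmeas ?_
  filter_upwards [ae_restrict_mem measurableSet_Ioi] with ξ hξ
  have hξR : R ≤ ξ := hsub hξ
  have hηb : |η ξ| ≤ A / R ^ γ := eta_bound hR hγ hA le_rfl ξ hξR
  have hARγ : 0 ≤ A / R ^ γ := div_nonneg hA0 (Real.rpow_pos_of_pos hR γ).le
  simp only [Real.norm_eq_abs, abs_mul]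
  calc |ξ| * |Real.exp (-(c * ξ ^ 2))| * |η ξ|
      ≤ |ξ| * |Real.exp (-(c * ξ ^ 2))| * (A / R ^ γ) := by
        apply mul_le_mul_of_nonneg_left hηb (by positivity)
    _ ≤ |A / R ^ γ| * (|ξ| * |Real.exp (-(c * ξ ^ 2))|) := by
        rw [abs_of_nonneg hARγ]; ring_nf; exact le_refl _

lemma Gaux_bound {c R γ A : ℝ} (hc : 0 < c) (hR : 0 < R) (hγ : 0 ≤ γ) (hA0 : 0 ≤ A)
    {η : ℝ → ℝ} (hηc : ContinuousOn η (Set.Ici R))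
    (hA : ∀ s ∈ Set.Ici R, s ^ γ * |η s| ≤ A) {x : ℝ} (hx : R ≤ x) :
    |Gaux c η x| ≤ A / x ^ γ * (Real.exp (-(c * x ^ 2)) / (2 * c)) := by
  have hx0 : 0 < x := lt_of_lt_of_le hR hx
  have hbase : Integrable fun ξ : ℝ => ξ * Real.exp (-(c * ξ ^ 2)) := by
    simpa [neg_mul] using integrable_mul_exp_neg_mul_sq hc
  have hgint := Gaux_integrableOn hc hR hγ hA0 hηc hA hx
  have h1 : |Gaux c η x| ≤ ∫ ξ in Set.Ioi x, |ξ * Real.exp (-(c * ξ ^ 2)) * η ξ| := by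
    simpa only [Gaux, Real.norm_eq_abs] using
      norm_integral_le_integral_norm (μ := volume.restrict (Set.Ioi x))
        (fun ξ => ξ * Real.exp (-(c * ξ ^ 2)) * η ξ)
  have h2 : (∫ ξ in Set.Ioi x, |ξ * Real.exp (-(c * ξ ^ 2)) * η ξ|)
      ≤ ∫ ξ in Set.Ioi x, (A / x ^ γ) * (ξ * Real.exp (-(c * ξ ^ 2))) := by
    refine setIntegral_mono_on hgint.abs ((hbase.const_mul _).integrableOn)
      measurableSet_Ioi (fun ξ hξ => ?_)
    have hξ0 : 0 < ξ := lt_trans hx0 hξ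
    have hηb : |η ξ| ≤ A / x ^ γ := eta_bound hR hγ hA hx ξ (le_of_lt hξ)
    have he : 0 < Real.exp (-(c * ξ ^ 2)) := Real.exp_pos _
    rw [abs_mul, abs_mul, abs_of_pos hξ0, abs_of_pos he]
    calc ξ * Real.exp (-(c * ξ ^ 2)) * |η ξ| ≤ ξ * Real.exp (-(c * ξ ^ 2)) * (A / x ^ γ) :=
          mul_le_mul_of_nonneg_left hηb (by positivity)
      _ = (A / x ^ γ) * (ξ * Real.exp (-(c * ξ ^ 2))) := by ring
  have h3 : (∫ ξ in Set.Ioi x, (A / x ^ γ) * (ξ * Real.exp (-(c * ξ ^ 2))))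
      = A / x ^ γ * (Real.exp (-(c * x ^ 2)) / (2 * c)) := by
    rw [MeasureTheory.integral_const_mul, integral_Ioi_texp hc]
  linarith [h1, h2.trans_eq h3]

lemma Eaux_bound {c R γ A : ℝ} (hc : 0 < c) (hR : 0 < R) (hγ : 0 ≤ γ) (hA0 : 0 ≤ A)
    {η : ℝ → ℝ} (hηc : ContinuousOn η (Set.Ici R))
    (hA : ∀ s ∈ Set.Ici R, s ^ γ * |η s| ≤ A) {x : ℝ} (hx : R ≤ x) :
    Real.exp (c * x ^ 2) * |Gaux c η x| ≤ (A / x ^ γ) / (2 * c) := by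
  have h := Gaux_bound hc hR hγ hA0 hηc hA hx
  have hee : Real.exp (c * x ^ 2) * Real.exp (-(c * x ^ 2)) = 1 := by
    rw [← Real.exp_add]; simp
  have hep : 0 < Real.exp (c * x ^ 2) := Real.exp_pos _
  calc Real.exp (c * x ^ 2) * |Gaux c η x|
      ≤ Real.exp (c * x ^ 2) * (A / x ^ γ * (Real.exp (-(c * x ^ 2)) / (2 * c))) :=
        mul_le_mul_of_nonneg_left h hep.le
    _ = (A / x ^ γ) / (2 * c) * (Real.exp (c * x ^ 2) * Real.exp (-(c * x ^ 2))) := by ring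
    _ = (A / x ^ γ) / (2 * c) := by rw [hee, mul_one]

lemma phiaux_integrableOn {c R γ A : ℝ} (hc : 0 < c) (hR : 0 < R) (hγ : 0 ≤ γ) (hA0 : 0 ≤ A)
    {η : ℝ → ℝ} (hηc : ContinuousOn η (Set.Ici R))
    (hA : ∀ s ∈ Set.Ici R, s ^ γ * |η s| ≤ A)
    (hφc : ContinuousOn (phiaux c η) (Set.Ici R)) {s : ℝ} (hs : R ≤ s) :
    IntegrableOn (phiaux c η) (Set.Ioi s) := by
  have hs0 : 0 < s := lt_of_lt_of_le hR hs
  have hsub : Set.Ioi s ⊆ Set.Ici R := fun y hy => le_trans hs (le_of_lt hy)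
  set K := (A / R ^ γ) / (2 * c) with hK
  have hK0 : 0 ≤ K := by positivity
  have hdom : IntegrableOn (fun x => K * (x ^ 2)⁻¹) (Set.Ioi s) := by
    have h1 : IntegrableOn (fun t : ℝ => t ^ (-2 : ℝ)) (Set.Ioi s) :=
      integrableOn_Ioi_rpow_of_lt (by norm_num) hs0
    have h2 : IntegrableOn (fun t : ℝ => (t ^ 2)⁻¹) (Set.Ioi s) := by
      refine h1.congr_fun (fun t ht => ?_) measurableSet_Ioi
      have ht0 : 0 ≤ t := (lt_trans hs0 ht).le
      rw [show (-2 : ℝ) = -((2 : ℕ) : ℝ) by norm_num]; beta_reduce; rw [Real.rpow_neg ht0, Real.rpow_natCast]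
    exact h2.const_mul K
  refine Integrable.mono hdom
    ((hφc.mono hsub).aestronglyMeasurable measurableSet_Ioi) ?_
  filter_upwards [ae_restrict_mem measurableSet_Ioi] with x hx
  have hxR : R ≤ x := hsub hx
  have hx0 : 0 < x := lt_of_lt_of_le hR hxR
  have hE := Eaux_bound hc hR hγ hA0 hηc hA hxR
  have hxγ : R ^ γ ≤ x ^ γ := Real.rpow_le_rpow hR.le hxR hγ
  have hRγ : 0 < R ^ γ := Real.rpow_pos_of_pos hR γ
  have hdivs : A / x ^ γ ≤ A / R ^ γ := div_le_div_of_nonneg_left hA0 hRγ hxγ |>.trans_eq rfl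
  have hE2 : Real.exp (c * x ^ 2) * |Gaux c η x| ≤ K := by
    refine hE.trans ?_
    rw [hK]
    exact div_le_div_of_nonneg_right hdivs (by linarith)
  simp only [Real.norm_eq_abs, phiaux]
  rw [abs_mul, abs_mul, abs_of_pos (Real.exp_pos _), abs_of_pos (by positivity : (0:ℝ) < (x^2)⁻¹)]
  rw [abs_of_nonneg (by positivity : (0:ℝ) ≤ K * (x ^ 2)⁻¹)]
  calc (x ^ 2)⁻¹ * (Real.exp (c * x ^ 2) * |Gaux c η x|) ≤ (x ^ 2)⁻¹ * K :=
        mul_le_mul_of_nonneg_left hE2 (by positivity)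
    _ = K * (x ^ 2)⁻¹ := by ring

/-- Weighted estimate for the second derivative of the solution of
`w'' - (b/2)(s w' - w) = η`: if `s^γ |η(s)| ≤ A` on `[R,∞)` then
`s^γ |w''(s)| ≤ 4 A` on `[R,∞)`. -/
theorem weighted_estimate_second_deriv
    (b R γ : ℝ) (hb : 0 < b) (hR : 0 < R) (hγ : 0 ≤ γ) (η : ℝ → ℝ)
    (hηc : ContinuousOn η (Set.Ici R))
    (hη0 : Filter.Tendsto η Filter.atTop (nhds 0))
    (A : ℝ) (hA : ∀ s ∈ Set.Ici R, s ^ γ * |η s| ≤ A) :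
    ∀ s ∈ Set.Ici R, s ^ γ * |iteratedDerivWithin 2 (wrep b η) (Set.Ici R) s| ≤ 4 * A := by
  have hc : 0 < b / 4 := by linarith
  set c := b / 4 with hc_def
  have hA0 : 0 ≤ A := le_trans (by positivity) (hA R Set.self_mem_Ici)
  -- continuity and integrability of the inner integrand
  have hgcont : ContinuousOn (fun ξ => ξ * Real.exp (-(c * ξ ^ 2)) * η ξ) (Set.Ici R) :=
    (Continuous.continuousOn (by continuity)).mul hηc
  have hgR : IntegrableOn (fun ξ => ξ * Real.exp (-(c * ξ ^ 2)) * η ξ) (Set.Ioi R) :=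
    Gaux_integrableOn hc hR hγ hA0 hηc hA le_rfl
  have hGderiv : ∀ x ∈ Set.Ici R,
      HasDerivWithinAt (Gaux c η) (-(x * Real.exp (-(c * x ^ 2)) * η x)) (Set.Ici R) x :=
    fun x hx => hasDerivWithinAt_integral_Ioi hgcont hgR hx
  have hGcont : ContinuousOn (Gaux c η) (Set.Ici R) :=
    fun x hx => (hGderiv x hx).continuousWithinAt
  have hφcont : ContinuousOn (phiaux c η) (Set.Ici R) := by
    apply ContinuousOn.mul
    · exact ContinuousOn.inv₀ ((continuous_pow 2).continuousOn)
        (fun x hx => pow_ne_zero 2 (ne_of_gt (lt_of_lt_of_le hR hx)))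
    · exact ((Real.continuous_exp.comp (by continuity)).continuousOn).mul hGcont
  have hφR : IntegrableOn (phiaux c η) (Set.Ioi R) :=
    phiaux_integrableOn hc hR hγ hA0 hηc hA hφcont le_rfl
  have hHderiv : ∀ s ∈ Set.Ici R,
      HasDerivWithinAt (Haux c η) (-(phiaux c η s)) (Set.Ici R) s :=
    fun s hs => hasDerivWithinAt_integral_Ioi hφcont hφR hs
  -- rewrite wrep in terms of Haux
  have hwrep : wrep b η = fun s => s * Haux c η s := by
    funext s
    unfold wrep Haux
    congr 1
    refine setIntegral_congr_fun measurableSet_Ioi (fun x _ => ?_)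
    unfold phiaux Gaux
    congr 1
    rw [← MeasureTheory.integral_const_mul]
    refine setIntegral_congr_fun measurableSet_Ioi (fun ξ _ => ?_)
    rw [show -(c) * (ξ ^ 2 - x ^ 2) = c * x ^ 2 + -(c * ξ ^ 2) by ring, Real.exp_add]
    ring
  -- first derivative
  have hw1 : ∀ x ∈ Set.Ici R, HasDerivWithinAt (wrep b η)
      (Haux c η x - x * phiaux c η x) (Set.Ici R) x := by
    intro x hx
    rw [hwrep]
    have h := (hasDerivWithinAt_id x (Set.Ici R)).fun_mul (hHderiv x hx)
    refine h.congr_deriv ?_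
    simp only [id_eq, one_mul]
    ring
  have hu := uniqueDiffOn_Ici R
  have hD1 : Set.EqOn (derivWithin (wrep b η) (Set.Ici R))
      (fun x => Haux c η x - x * phiaux c η x) (Set.Ici R) :=
    fun x hx => (hw1 x hx).derivWithin (hu x hx)
  -- derivative of the E-part
  have hEderiv : ∀ x ∈ Set.Ici R, HasDerivWithinAt
      (fun y => Real.exp (c * y ^ 2) * Gaux c η y)
      (2 * c * x * (Real.exp (c * x ^ 2) * Gaux c η x) - x * η x) (Set.Ici R) x := by
    intro x hx
    have hexp : HasDerivAt (fun y : ℝ => Real.exp (c * y ^ 2))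
        (Real.exp (c * x ^ 2) * (c * (2 * x ^ 1))) x :=
      ((hasDerivAt_pow 2 x).const_mul c).exp
    have h := hexp.hasDerivWithinAt.fun_mul (hGderiv x hx)
    refine h.congr_deriv ?_
    have hee : Real.exp (c * x ^ 2) * Real.exp (-(c * x ^ 2)) = 1 := by
      rw [← Real.exp_add]; simp
    linear_combination -(x * η x) * hee
  -- second derivative
  have hw2 : ∀ x ∈ Set.Ici R, HasDerivWithinAt
      (fun y => Haux c η y - y * phiaux c η y)
      (η x - 2 * c * (Real.exp (c * x ^ 2) * Gaux c η x)) (Set.Ici R) x := by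
    intro x hx
    have hxpos : 0 < x := lt_of_lt_of_le hR hx
    have hinv : HasDerivAt (fun y : ℝ => y⁻¹) (-(x ^ 2)⁻¹) x := hasDerivAt_inv hxpos.ne'
    have hprod := hinv.hasDerivWithinAt.mul (hEderiv x hx)
    have hsub := (hHderiv x hx).sub hprod
    have heq : ∀ y ∈ Set.Ici R, Haux c η y - y * phiaux c η y
        = Haux c η y - y⁻¹ * (Real.exp (c * y ^ 2) * Gaux c η y) := by
      intro y hy
      have hy0 : y ≠ 0 := ne_of_gt (lt_of_lt_of_le hR hy)
      unfold phiaux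
      field_simp
    have h2 := hsub.congr (fun y hy => heq y hy) (heq x hx)
    refine h2.congr_deriv ?_
    unfold phiaux
    field_simp
    ring
  -- the key formula
  have key : ∀ s ∈ Set.Ici R, iteratedDerivWithin 2 (wrep b η) (Set.Ici R) s
      = η s - 2 * c * (Real.exp (c * s ^ 2) * Gaux c η s) := by
    intro s hs
    rw [show (2 : ℕ) = 1 + 1 from rfl, iteratedDerivWithin_succ]
    have hEq : Set.EqOn (iteratedDerivWithin 1 (wrep b η) (Set.Ici R))
        (fun x => Haux c η x - x * phiaux c η x) (Set.Ici R) := by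
      intro y hy
      rw [iteratedDerivWithin_one]
      exact hD1 hy
    rw [derivWithin_congr hEq (hEq hs)]
    exact (hw2 s hs).derivWithin (hu s hs)
  -- final estimate
  intro s hs
  have hspos : 0 < s := lt_of_lt_of_le hR hs
  have hsγ : 0 < s ^ γ := Real.rpow_pos_of_pos hspos γ
  rw [key s hs]
  have hEb : Real.exp (c * s ^ 2) * |Gaux c η s| ≤ (A / s ^ γ) / (2 * c) :=
    Eaux_bound hc hR hγ hA0 hηc hA hs
  have h1 : |η s - 2 * c * (Real.exp (c * s ^ 2) * Gaux c η s)|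
      ≤ |η s| + 2 * c * (Real.exp (c * s ^ 2) * |Gaux c η s|) := by
    calc |η s - 2 * c * (Real.exp (c * s ^ 2) * Gaux c η s)|
        ≤ |η s| + |2 * c * (Real.exp (c * s ^ 2) * Gaux c η s)| := abs_sub _ _
      _ = |η s| + 2 * c * (Real.exp (c * s ^ 2) * |Gaux c η s|) := by
          rw [abs_mul, abs_of_nonneg (by linarith : (0:ℝ) ≤ 2 * c), abs_mul,
            abs_of_pos (Real.exp_pos _)]
  have h2 : s ^ γ * |η s| ≤ A := hA s hs
  have h3 : s ^ γ * (2 * c * (Real.exp (c * s ^ 2) * |Gaux c η s|))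
      ≤ s ^ γ * (2 * c * ((A / s ^ γ) / (2 * c))) := by
    apply mul_le_mul_of_nonneg_left _ hsγ.le
    exact mul_le_mul_of_nonneg_left hEb (by linarith)
  have h4 : s ^ γ * (2 * c * ((A / s ^ γ) / (2 * c))) = A := by
    field_simp
  calc s ^ γ * |η s - 2 * c * (Real.exp (c * s ^ 2) * Gaux c η s)|
      ≤ s ^ γ * (|η s| + 2 * c * (Real.exp (c * s ^ 2) * |Gaux c η s|)) :=
        mul_le_mul_of_nonneg_left h1 hsγ.le
    _ = s ^ γ * |η s| + s ^ γ * (2 * c * (Real.exp (c * s ^ 2) * |Gaux c η s|)) := by ring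
    _ ≤ A + A := add_le_add h2 (h3.trans_eq h4)
    _ ≤ 4 * A := by linarith
end

section
/- Let b > 0, R > 0, m ≥ 1 an integer, and let η : [R,∞) → ℝ be of class C^m with η^{(j)}(s) → 0 as s → ∞ for every j = 0,…,m. Then the unique C² solution w(s) = s ∫_s^∞ x^{−2} ( ∫_x^∞ ξ exp(−(b/4)(ξ² − x²)) η(ξ) dξ ) dx of w'' − (b/2)(s w' − w) = η with w/s → 0 and s w' − w → 0 at infinity is of class C^{m+2} on [R,∞), and w^{(j)}(s) → 0 as s → ∞ for every j = 0,…,m+2. -/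
open Set Filter MeasureTheory

namespace HRS

noncomputable def K (a : ℝ) (k : ℕ) (ξ : ℝ) : ℝ := ξ * (ξ ^ k)⁻¹ * Real.exp (-(a * ξ ^ 2))

noncomputable def FF (a R : ℝ) (η : ℝ → ℝ) (i k : ℕ) (s : ℝ) : ℝ :=
  ∫ ξ in Ioi s, K a k ξ * iteratedDerivWithin i η (Ici R) ξ

noncomputable def UU (a R : ℝ) (η : ℝ → ℝ) (i k : ℕ) (s : ℝ) : ℝ :=
  s ^ k * Real.exp (a * s ^ 2) * FF a R η i k s

lemma neg_sq_tendsto (a : ℝ) (ha : 0 < a) :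
    Tendsto (fun ξ : ℝ => Real.exp (-(a * ξ ^ 2))) atTop (nhds 0) := by
  apply Real.tendsto_exp_atBot.comp
  apply tendsto_neg_atBot_iff.mpr
  exact Tendsto.const_mul_atTop ha (tendsto_pow_atTop (two_ne_zero))

lemma gauss_hasDerivAt (a : ℝ) (ha : 0 < a) (x : ℝ) :
    HasDerivAt (fun ξ : ℝ => -(2 * a)⁻¹ * Real.exp (-(a * ξ ^ 2)))
      (x * Real.exp (-(a * x ^ 2))) x := by
  have h1 : HasDerivAt (fun ξ : ℝ => -(a * ξ ^ 2)) (-(a * (2 * x))) x := by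
    simpa using ((hasDerivAt_pow 2 x).const_mul a).fun_neg
  have h2 := (h1.exp).const_mul (-(2 * a)⁻¹)
  refine h2.congr_deriv ?_
  field_simp

lemma gauss_tendsto (a : ℝ) (ha : 0 < a) :
    Tendsto (fun ξ : ℝ => -(2 * a)⁻¹ * Real.exp (-(a * ξ ^ 2))) atTop (nhds 0) := by
  have := (neg_sq_tendsto a ha).const_mul (-(2 * a)⁻¹)
  simpa using this

lemma gauss_integrableOn (a : ℝ) (ha : 0 < a) {s : ℝ} (hs : 0 ≤ s) :
    IntegrableOn (fun ξ : ℝ => ξ * Real.exp (-(a * ξ ^ 2))) (Ioi s) := by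
  apply integrableOn_Ioi_deriv_of_nonneg
    (g := fun ξ : ℝ => -(2 * a)⁻¹ * Real.exp (-(a * ξ ^ 2)))
  · exact (Continuous.continuousWithinAt (by continuity))
  · exact fun x _ => gauss_hasDerivAt a ha x
  · intro x hx
    have hx0 : 0 < x := lt_of_le_of_lt hs hx
    positivity
  · exact gauss_tendsto a ha

lemma gauss_integral (a : ℝ) (ha : 0 < a) {s : ℝ} (hs : 0 ≤ s) :
    ∫ ξ in Ioi s, ξ * Real.exp (-(a * ξ ^ 2)) = (2 * a)⁻¹ * Real.exp (-(a * s ^ 2)) := by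
  have := integral_Ioi_of_hasDerivAt_of_tendsto
    (f := fun ξ : ℝ => -(2 * a)⁻¹ * Real.exp (-(a * ξ ^ 2)))
    (f' := fun ξ : ℝ => ξ * Real.exp (-(a * ξ ^ 2)))
    (Continuous.continuousWithinAt (by continuity))
    (fun x _ => gauss_hasDerivAt a ha x)
    (gauss_integrableOn a ha hs)
    (gauss_tendsto a ha)
  rw [this]
  ring

lemma invsq_hasDerivAt {x : ℝ} (hx : x ≠ 0) :
    HasDerivAt (fun y : ℝ => -y⁻¹) ((x ^ 2)⁻¹) x := by
  simpa using (hasDerivAt_inv hx).fun_neg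

lemma invsq_integrableOn {s : ℝ} (hs : 0 < s) :
    IntegrableOn (fun x : ℝ => (x ^ 2)⁻¹) (Ioi s) := by
  apply integrableOn_Ioi_deriv_of_nonneg (g := fun y : ℝ => -y⁻¹) (l := 0)
  · exact ((continuousAt_inv₀ hs.ne').neg).continuousWithinAt
  · exact fun x hx => invsq_hasDerivAt (lt_trans hs hx).ne'
  · intro x hx; positivity
  · simpa using (tendsto_inv_atTop_zero (𝕜 := ℝ)).neg

lemma invsq_integral {s : ℝ} (hs : 0 < s) :
    ∫ x in Ioi s, (x ^ 2)⁻¹ = s⁻¹ := by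
  have := integral_Ioi_of_hasDerivAt_of_tendsto
    (f := fun y : ℝ => -y⁻¹) (f' := fun x : ℝ => (x ^ 2)⁻¹)
    (((continuousAt_inv₀ hs.ne').neg).continuousWithinAt)
    (fun x hx => invsq_hasDerivAt (lt_trans hs hx).ne')
    (invsq_integrableOn hs)
    (by simpa using (tendsto_inv_atTop_zero (𝕜 := ℝ)).neg)
  rw [this]
  ring


lemma K_continuousOn (a : ℝ) (k : ℕ) {s : ℝ} (hs : 0 < s) :
    ContinuousOn (K a k) (Ici s) := by
  apply ContinuousOn.mul
  · apply ContinuousOn.mul continuousOn_id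
    apply ContinuousOn.inv₀ (continuous_pow k).continuousOn
    intro x hx
    exact pow_ne_zero _ (lt_of_lt_of_le hs hx).ne'
  · exact Continuous.continuousOn (by continuity)

lemma K_nonneg (a : ℝ) (k : ℕ) {x s : ℝ} (hs : 0 < s) (hx : x ∈ Ioi s) : 0 ≤ K a k x := by
  have : (0:ℝ) < x := lt_trans hs hx
  unfold K
  positivity

lemma K_le {a : ℝ} (k : ℕ) {x s : ℝ} (hs : 0 < s) (hx : x ∈ Ioi s) :
    K a k x ≤ (s ^ k)⁻¹ * (x * Real.exp (-(a * x ^ 2))) := by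
  have hx0 : (0:ℝ) < x := lt_trans hs hx
  have h1 : (x ^ k)⁻¹ ≤ (s ^ k)⁻¹ := by
    apply inv_anti₀ (by positivity)
    exact pow_le_pow_left₀ hs.le (le_of_lt hx) k
  unfold K
  calc x * (x ^ k)⁻¹ * Real.exp (-(a * x ^ 2))
      ≤ x * (s ^ k)⁻¹ * Real.exp (-(a * x ^ 2)) := by
        apply mul_le_mul_of_nonneg_right _ (Real.exp_pos _).le
        exact mul_le_mul_of_nonneg_left h1 hx0.le
    _ = (s ^ k)⁻¹ * (x * Real.exp (-(a * x ^ 2))) := by ring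

lemma integrableOn_K_mul {a : ℝ} (ha : 0 < a) {φ : ℝ → ℝ} {M : ℝ} {s : ℝ} (hs : 0 < s)
    (hφ : ContinuousOn φ (Ici s)) (hM : ∀ ξ ∈ Ici s, |φ ξ| ≤ M) (k : ℕ) :
    IntegrableOn (fun ξ => K a k ξ * φ ξ) (Ioi s) := by
  refine Integrable.mono' ((gauss_integrableOn a ha hs.le).const_mul (M * (s ^ k)⁻¹)) ?_ ?_
  · exact ((K_continuousOn a k hs).mul hφ).aestronglyMeasurable measurableSet_Ici
      |>.mono_measure (Measure.restrict_mono Ioi_subset_Ici_self le_rfl)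
  · filter_upwards [ae_restrict_mem measurableSet_Ioi] with ξ hξ
    have hξ0 : (0:ℝ) < ξ := lt_trans hs hξ
    have h1 : |K a k ξ * φ ξ| = K a k ξ * |φ ξ| := by
      rw [abs_mul, abs_of_nonneg (K_nonneg a k hs hξ)]
    have hMξ : |φ ξ| ≤ M := hM ξ (mem_Ici.2 (le_of_lt hξ))
    have hM0 : 0 ≤ M := le_trans (abs_nonneg _) hMξ
    calc ‖K a k ξ * φ ξ‖ = K a k ξ * |φ ξ| := h1
      _ ≤ ((s ^ k)⁻¹ * (ξ * Real.exp (-(a * ξ ^ 2)))) * M := by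
          apply mul_le_mul (K_le k hs hξ) hMξ (abs_nonneg _)
          positivity
      _ = M * (s ^ k)⁻¹ * (ξ * Real.exp (-(a * ξ ^ 2))) := by ring

lemma abs_integral_K_mul_le {a : ℝ} (ha : 0 < a) {φ : ℝ → ℝ} {M : ℝ} {s : ℝ} (hs : 0 < s)
    (hφ : ContinuousOn φ (Ici s)) (hM : ∀ ξ ∈ Ici s, |φ ξ| ≤ M) (k : ℕ) :
    |∫ ξ in Ioi s, K a k ξ * φ ξ| ≤ M * (s ^ k)⁻¹ * ((2 * a)⁻¹ * Real.exp (-(a * s ^ 2))) := by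
  have hM0 : 0 ≤ M := le_trans (abs_nonneg _) (hM s self_mem_Ici)
  calc |∫ ξ in Ioi s, K a k ξ * φ ξ|
      ≤ ∫ ξ in Ioi s, M * (s ^ k)⁻¹ * (ξ * Real.exp (-(a * ξ ^ 2))) := by
        rw [← Real.norm_eq_abs]
        apply MeasureTheory.norm_integral_le_of_norm_le
          ((gauss_integrableOn a ha hs.le).const_mul (M * (s ^ k)⁻¹))
        filter_upwards [ae_restrict_mem measurableSet_Ioi] with ξ hξ
        have h1 : |K a k ξ * φ ξ| = K a k ξ * |φ ξ| := by
          rw [abs_mul, abs_of_nonneg (K_nonneg a k hs hξ)]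
        calc ‖K a k ξ * φ ξ‖ = K a k ξ * |φ ξ| := h1
          _ ≤ ((s ^ k)⁻¹ * (ξ * Real.exp (-(a * ξ ^ 2)))) * M := by
              apply mul_le_mul (K_le k hs hξ) (hM ξ (mem_Ici.2 (le_of_lt hξ))) (abs_nonneg _)
              have : (0:ℝ) < ξ := lt_trans hs hξ
              positivity
          _ = M * (s ^ k)⁻¹ * (ξ * Real.exp (-(a * ξ ^ 2))) := by ring
    _ = M * (s ^ k)⁻¹ * ((2 * a)⁻¹ * Real.exp (-(a * s ^ 2))) := by
        rw [MeasureTheory.integral_const_mul, gauss_integral a ha hs.le]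

lemma UU_abs_le {a R : ℝ} {η : ℝ → ℝ} (ha : 0 < a) {i k : ℕ} {M s₀ s : ℝ} (hs₀ : 0 < s₀)
    (hφ : ContinuousOn (iteratedDerivWithin i η (Ici R)) (Ici s₀))
    (hM : ∀ ξ ∈ Ici s₀, |iteratedDerivWithin i η (Ici R) ξ| ≤ M)
    (hs : s₀ ≤ s) : |UU a R η i k s| ≤ (2 * a)⁻¹ * M := by
  have hs0 : 0 < s := lt_of_lt_of_le hs₀ hs
  have h := abs_integral_K_mul_le ha hs0 (hφ.mono (Ici_subset_Ici.2 hs))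
    (fun ξ hξ => hM ξ (le_trans hs hξ)) k
  unfold UU FF
  rw [abs_mul]
  have h2 : |s ^ k * Real.exp (a * s ^ 2)| = s ^ k * Real.exp (a * s ^ 2) := by
    apply abs_of_nonneg; positivity
  rw [h2]
  calc s ^ k * Real.exp (a * s ^ 2) * |∫ ξ in Ioi s, K a k ξ * iteratedDerivWithin i η (Ici R) ξ|
      ≤ s ^ k * Real.exp (a * s ^ 2) * (M * (s ^ k)⁻¹ * ((2 * a)⁻¹ * Real.exp (-(a * s ^ 2)))) := by
        apply mul_le_mul_of_nonneg_left h (by positivity)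
    _ = (2 * a)⁻¹ * M := by
        have e1 : s ^ k * (s ^ k)⁻¹ = (1:ℝ) := mul_inv_cancel₀ (pow_ne_zero k hs0.ne')
        have e2 : Real.exp (a * s ^ 2) * Real.exp (-(a * s ^ 2)) = 1 := by
          rw [← Real.exp_add]; simp
        calc s ^ k * Real.exp (a * s ^ 2) * (M * (s ^ k)⁻¹ * ((2 * a)⁻¹ * Real.exp (-(a * s ^ 2))))
            = (s ^ k * (s ^ k)⁻¹) * (Real.exp (a * s ^ 2) * Real.exp (-(a * s ^ 2))) * ((2 * a)⁻¹ * M) := by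
              ring
          _ = (2 * a)⁻¹ * M := by rw [e1, e2]; ring

lemma UU_tendsto {a R : ℝ} {η : ℝ → ℝ} (ha : 0 < a) (hR : 0 < R) {i : ℕ} (k : ℕ)
    (hφ : ContinuousOn (iteratedDerivWithin i η (Ici R)) (Ici R))
    (h0 : Tendsto (iteratedDerivWithin i η (Ici R)) atTop (nhds 0)) :
    Tendsto (UU a R η i k) atTop (nhds 0) := by
  rw [Metric.tendsto_atTop]
  intro ε hε
  obtain ⟨N, hN⟩ := Metric.tendsto_atTop.1 h0 (a * ε) (by positivity)
  refine ⟨max N R, fun s hs => ?_⟩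
  have hs₀ : 0 < max N R := lt_of_lt_of_le hR (le_max_right _ _)
  have hb : ∀ ξ ∈ Ici (max N R), |iteratedDerivWithin i η (Ici R) ξ| ≤ a * ε := by
    intro ξ hξ
    have := hN ξ (le_trans (le_max_left _ _) hξ)
    rw [Real.dist_eq, sub_zero] at this
    exact this.le
  have habs := UU_abs_le (k := k) ha hs₀ (hφ.mono (Ici_subset_Ici.2 (le_max_right _ _))) hb hs
  rw [Real.dist_eq, sub_zero]
  calc |UU a R η i k s| ≤ (2 * a)⁻¹ * (a * ε) := habs
    _ = ε / 2 := by field_simp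
    _ < ε := by linarith

lemma bounded_of_tendsto {R : ℝ} {f : ℝ → ℝ} (hc : ContinuousOn f (Ici R))
    (h0 : Tendsto f atTop (nhds 0)) : ∃ M, 0 ≤ M ∧ ∀ s ∈ Ici R, |f s| ≤ M := by
  obtain ⟨S, hS⟩ := Metric.tendsto_atTop.1 h0 1 one_pos
  obtain ⟨C, hC⟩ := (isCompact_Icc (a := R) (b := max R S)).exists_bound_of_continuousOn
    (hc.mono (Icc_subset_Ici_self))
  refine ⟨max C 1, le_trans zero_le_one (le_max_right _ _), fun s hs => ?_⟩
  rcases le_or_gt s (max R S) with h | h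
  · exact le_trans (hC s ⟨hs, h⟩) (le_max_left _ _)
  · have := hS s (le_trans (le_max_right _ _) h.le)
    rw [Real.dist_eq, sub_zero] at this
    exact le_trans this.le (le_max_right _ _)


lemma hasDerivWithinAt_integral_Ioi {R : ℝ} {f : ℝ → ℝ}
    (hf : ContinuousOn f (Ici R)) (hint : IntegrableOn f (Ioi R)) {s : ℝ} (hs : s ∈ Ici R) :
    HasDerivWithinAt (fun x => ∫ t in Ioi x, f t) (-f s) (Ici R) s := by
  have hmeas : AEStronglyMeasurable f (volume.restrict (Ioi R)) := hint.aestronglyMeasurable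
  have key : ∀ x ∈ Ici R, ∫ t in Ioi x, f t = (∫ t in Ioi R, f t) - ∫ t in R..x, f t := by
    intro x hx
    rw [intervalIntegral.integral_of_le hx]
    have hU : Ioc R x ∪ Ioi x = Ioi R := Ioc_union_Ioi_eq_Ioi hx
    have h1 : IntegrableOn f (Ioc R x) := hint.mono (by rw [← hU]; exact subset_union_left) le_rfl
    have h2 : IntegrableOn f (Ioi x) := hint.mono (by rw [← hU]; exact subset_union_right) le_rfl
    rw [← hU, MeasureTheory.setIntegral_union (Ioc_disjoint_Ioi le_rfl) measurableSet_Ioi h1 h2]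
    ring
  have hdi : HasDerivWithinAt (fun x => ∫ t in R..x, f t) (f s) (Ici R) s := by
    rcases eq_or_lt_of_le (mem_Ici.1 hs) with rfl | hlt
    · exact intervalIntegral.integral_hasDerivWithinAt_right (IntervalIntegrable.refl)
        (t := Ioi R) ⟨Ioi R, self_mem_nhdsWithin, hmeas⟩
        ((hf R self_mem_Ici).mono Ioi_subset_Ici_self)
    · have hIIcc : IntegrableOn f (uIcc R s) := by
        rw [uIcc_of_le (le_of_lt hlt)]
        rw [integrableOn_Icc_iff_integrableOn_Ioc]
        exact hint.mono Ioc_subset_Ioi_self le_rfl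
      have : HasDerivAt (fun x => ∫ t in R..x, f t) (f s) s :=
        intervalIntegral.integral_hasDerivAt_right hIIcc.intervalIntegrable
          ⟨Ioi R, Ioi_mem_nhds hlt, hmeas⟩
          ((hf s hs).continuousAt (Ici_mem_nhds hlt))
      exact this.hasDerivWithinAt
  have hiv : HasDerivWithinAt (fun x => (∫ t in Ioi R, f t) - ∫ t in R..x, f t) (-f s) (Ici R) s := by
    simpa using hdi.const_sub (∫ t in Ioi R, f t)
  exact hiv.congr key (key s hs)


lemma hasDerivAt_inv_pow (r : ℕ) {s : ℝ} (hs : s ≠ 0) :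
    HasDerivAt (fun y : ℝ => (y ^ r)⁻¹) (-(r : ℝ) * (s ^ (r + 1))⁻¹) s := by
  have h := (hasDerivAt_pow r s).fun_inv (pow_ne_zero r hs)
  refine h.congr_deriv ?_
  rcases r with _ | q
  · simp
  · have nz1 : s ^ (q + 1) ≠ 0 := pow_ne_zero _ hs
    have nz2 : s ^ (q + 1 + 1) ≠ 0 := pow_ne_zero _ hs
    rw [Nat.add_sub_cancel]
    field_simp
    ring

lemma FF_hasDerivWithinAt {a R : ℝ} {η : ℝ → ℝ} (ha : 0 < a) (hR : 0 < R) {i : ℕ} (k : ℕ) {M : ℝ}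
    (hc : ContinuousOn (iteratedDerivWithin i η (Ici R)) (Ici R))
    (hM : ∀ ξ ∈ Ici R, |iteratedDerivWithin i η (Ici R) ξ| ≤ M)
    {s : ℝ} (hs : s ∈ Ici R) :
    HasDerivWithinAt (FF a R η i k)
      (-(K a k s * iteratedDerivWithin i η (Ici R) s)) (Ici R) s :=
  hasDerivWithinAt_integral_Ioi ((K_continuousOn a k hR).mul hc)
    (integrableOn_K_mul ha hR hc hM k) hs

lemma FF_continuousOn {a R : ℝ} {η : ℝ → ℝ} (ha : 0 < a) (hR : 0 < R) {i : ℕ} (k : ℕ) {M : ℝ}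
    (hc : ContinuousOn (iteratedDerivWithin i η (Ici R)) (Ici R))
    (hM : ∀ ξ ∈ Ici R, |iteratedDerivWithin i η (Ici R) ξ| ≤ M) :
    ContinuousOn (FF a R η i k) (Ici R) :=
  fun s hs => (FF_hasDerivWithinAt ha hR k hc hM hs).continuousWithinAt

lemma FF_ibp {a R : ℝ} {η : ℝ → ℝ} (ha : 0 < a) (hR : 0 < R) {i k : ℕ} {Mi Mi1 : ℝ}
    (hci : ContinuousOn (iteratedDerivWithin i η (Ici R)) (Ici R))
    (hci1 : ContinuousOn (iteratedDerivWithin (i+1) η (Ici R)) (Ici R))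
    (hdi : ∀ x ∈ Ioi R, HasDerivAt (iteratedDerivWithin i η (Ici R))
      (iteratedDerivWithin (i+1) η (Ici R) x) x)
    (hMi : ∀ ξ ∈ Ici R, |iteratedDerivWithin i η (Ici R) ξ| ≤ Mi)
    (hMi1 : ∀ ξ ∈ Ici R, |iteratedDerivWithin (i+1) η (Ici R) ξ| ≤ Mi1)
    {s : ℝ} (hs : s ∈ Ici R) :
    FF a R η (i+1) (k+1) s
      = 2*a*FF a R η i k s + (k:ℝ) * FF a R η i (k+2) s
        - (s^k)⁻¹ * Real.exp (-(a*s^2)) * iteratedDerivWithin i η (Ici R) s := by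
  have hs0 : 0 < s := lt_of_lt_of_le hR hs
  set φ := iteratedDerivWithin i η (Ici R) with hφdef
  set ψ := iteratedDerivWithin (i+1) η (Ici R) with hψdef
  set g : ℝ → ℝ := fun ξ => (ξ^k)⁻¹ * Real.exp (-(a*ξ^2)) * φ ξ with hgdef
  set g' : ℝ → ℝ := fun ξ => K a (k+1) ξ * ψ ξ - 2*a*(K a k ξ * φ ξ) - (k:ℝ) * (K a (k+2) ξ * φ ξ)
    with hg'def
  have hMi0 : 0 ≤ Mi := le_trans (abs_nonneg _) (hMi R self_mem_Ici)
  have hderiv : ∀ x ∈ Ioi s, HasDerivAt g (g' x) x := by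
    intro x hx
    have hx0 : (0:ℝ) < x := lt_trans hs0 hx
    have hxR : x ∈ Ioi R := mem_Ioi.2 (lt_of_le_of_lt hs hx)
    have hexp : HasDerivAt (fun ξ : ℝ => Real.exp (-(a * ξ ^ 2)))
        (-(a*(2*x)) * Real.exp (-(a*x^2))) x := by
      have h0 : HasDerivAt (fun ξ : ℝ => -(a * ξ ^ 2)) (-(a * (2 * x))) x := by
        simpa using ((hasDerivAt_pow 2 x).const_mul a).fun_neg
      exact (by simpa [mul_comm] using h0.exp)
    have h1 := (hasDerivAt_inv_pow k hx0.ne').mul hexp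
    have h2 := h1.mul (hdi x hxR)
    refine h2.congr_deriv ?_
    simp only [hg'def]
    unfold K
    have nz0 : x ≠ 0 := hx0.ne'
    have nzk : x ^ k ≠ 0 := pow_ne_zero _ nz0
    have nzk1 : x ^ (k+1) ≠ 0 := pow_ne_zero _ nz0
    have nzk2 : x ^ (k+2) ≠ 0 := pow_ne_zero _ nz0
    simp only [Pi.mul_apply]
    field_simp
    ring
  have hgcont : ContinuousOn g (Ici s) := by
    apply ContinuousOn.mul
    · apply ContinuousOn.mul
      · apply ContinuousOn.inv₀ (continuous_pow k).continuousOn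
        exact fun x hx => pow_ne_zero _ (lt_of_lt_of_le hs0 hx).ne'
      · exact Continuous.continuousOn (by continuity)
    · exact hci.mono (Ici_subset_Ici.2 hs)
  have hgtend : Tendsto g atTop (nhds 0) := by
    apply squeeze_zero_norm' (a := fun ξ => Mi * (R^k)⁻¹ * Real.exp (-(a*ξ^2)))
    · filter_upwards [Ici_mem_atTop R] with ξ hξ
      have hξ0 : (0:ℝ) < ξ := lt_of_lt_of_le hR hξ
      have h1 : ‖g ξ‖ = (ξ^k)⁻¹ * Real.exp (-(a*ξ^2)) * |φ ξ| := by
        simp only [hgdef, Real.norm_eq_abs, abs_mul]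
        rw [abs_of_nonneg (by positivity : (0:ℝ) ≤ (ξ^k)⁻¹),
          abs_of_nonneg (Real.exp_pos _).le]
      rw [h1]
      have h2 : (ξ^k)⁻¹ ≤ (R^k)⁻¹ := by
        apply inv_anti₀ (by positivity)
        exact pow_le_pow_left₀ hR.le hξ k
      calc (ξ^k)⁻¹ * Real.exp (-(a*ξ^2)) * |φ ξ|
          ≤ (R^k)⁻¹ * Real.exp (-(a*ξ^2)) * Mi := by
            apply mul_le_mul _ (hMi ξ hξ) (abs_nonneg _) (by positivity)
            exact mul_le_mul_of_nonneg_right h2 (Real.exp_pos _).le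
        _ = Mi * (R^k)⁻¹ * Real.exp (-(a*ξ^2)) := by ring
    · simpa using (neg_sq_tendsto a ha).const_mul (Mi * (R^k)⁻¹)
  have hciS : ContinuousOn φ (Ici s) := hci.mono (Ici_subset_Ici.2 hs)
  have hci1S : ContinuousOn ψ (Ici s) := hci1.mono (Ici_subset_Ici.2 hs)
  have hMiS : ∀ ξ ∈ Ici s, |φ ξ| ≤ Mi := fun ξ hξ => hMi ξ (mem_Ici.2 (le_trans hs hξ))
  have hMi1S : ∀ ξ ∈ Ici s, |ψ ξ| ≤ Mi1 := fun ξ hξ => hMi1 ξ (mem_Ici.2 (le_trans hs hξ))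
  have int1 : IntegrableOn (fun ξ => K a (k+1) ξ * ψ ξ) (Ioi s) :=
    integrableOn_K_mul ha hs0 hci1S hMi1S (k+1)
  have int2 : IntegrableOn (fun ξ => K a k ξ * φ ξ) (Ioi s) :=
    integrableOn_K_mul ha hs0 hciS hMiS k
  have int3 : IntegrableOn (fun ξ => K a (k+2) ξ * φ ξ) (Ioi s) :=
    integrableOn_K_mul ha hs0 hciS hMiS (k+2)
  have hintA : Integrable (fun ξ => K a (k+1) ξ * ψ ξ - 2*a*(K a k ξ * φ ξ))
      (volume.restrict (Ioi s)) := int1.sub (int2.const_mul (2*a))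
  have hint' : IntegrableOn g' (Ioi s) := hintA.sub (int3.const_mul (k:ℝ))
  have hFTC := integral_Ioi_of_hasDerivAt_of_tendsto (hgcont s self_mem_Ici) hderiv hint' hgtend
  have hsplit : ∫ x in Ioi s, g' x
      = FF a R η (i+1) (k+1) s - 2*a*FF a R η i k s - (k:ℝ) * FF a R η i (k+2) s := by
    simp only [hg'def]
    rw [MeasureTheory.integral_sub hintA (int3.const_mul (k:ℝ)),
      MeasureTheory.integral_sub int1 (int2.const_mul (2*a)),
      MeasureTheory.integral_const_mul, MeasureTheory.integral_const_mul]
    rfl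
  rw [hsplit] at hFTC
  have hgs : g s = (s^k)⁻¹ * Real.exp (-(a*s^2)) * φ s := rfl
  rw [hgs] at hFTC
  linarith

lemma UU_hasDerivWithinAt_raw {a R : ℝ} {η : ℝ → ℝ} (ha : 0 < a) (hR : 0 < R) {i : ℕ} (k : ℕ)
    {M : ℝ} (hc : ContinuousOn (iteratedDerivWithin i η (Ici R)) (Ici R))
    (hM : ∀ ξ ∈ Ici R, |iteratedDerivWithin i η (Ici R) ξ| ≤ M)
    {s : ℝ} (hs : s ∈ Ici R) :
    HasDerivWithinAt (UU a R η i k)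
      ((k:ℝ)/s * UU a R η i k s + 2*a*s*UU a R η i k s - s * iteratedDerivWithin i η (Ici R) s)
      (Ici R) s := by
  have hs0 : 0 < s := lt_of_lt_of_le hR hs
  have hexp : HasDerivAt (fun y : ℝ => Real.exp (a * y ^ 2)) (a*(2*s) * Real.exp (a*s^2)) s := by
    have h0 : HasDerivAt (fun y : ℝ => a * y ^ 2) (a * (2 * s)) s := by
      simpa using (hasDerivAt_pow 2 s).const_mul a
    exact (by simpa [mul_comm] using h0.exp)
  have h1 : HasDerivAt (fun y : ℝ => y ^ k * Real.exp (a * y ^ 2))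
      ((k:ℝ) * s^(k-1) * Real.exp (a*s^2) + s^k * (a*(2*s) * Real.exp (a*s^2))) s :=
    (hasDerivAt_pow k s).mul hexp
  have h2 := h1.hasDerivWithinAt.mul (FF_hasDerivWithinAt ha hR k hc hM hs)
  have heq : ((k:ℝ) * s^(k-1) * Real.exp (a*s^2) + s^k * (a*(2*s) * Real.exp (a*s^2)))
        * FF a R η i k s
      + s ^ k * Real.exp (a * s ^ 2) * (-(K a k s * iteratedDerivWithin i η (Ici R) s))
      = (k:ℝ)/s * UU a R η i k s + 2*a*s*UU a R η i k s
        - s * iteratedDerivWithin i η (Ici R) s := by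
    unfold UU K
    have e0 : (k:ℝ) * s^(k-1) = (k:ℝ) * s^k / s := by
      rcases k with _ | q
      · simp
      · rw [Nat.add_sub_cancel, pow_succ]
        field_simp
    have e1 : s ^ k * (s ^ k)⁻¹ = (1:ℝ) := mul_inv_cancel₀ (pow_ne_zero k hs0.ne')
    have e2 : Real.exp (a * s ^ 2) * Real.exp (-(a * s ^ 2)) = 1 := by
      rw [← Real.exp_add]; simp
    rw [e0, Real.exp_neg]
    field_simp
    ring
  exact heq ▸ h2

lemma UU_hasDerivWithinAt {a R : ℝ} {η : ℝ → ℝ} (ha : 0 < a) (hR : 0 < R) {i k : ℕ}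
    {Mi Mi1 : ℝ}
    (hci : ContinuousOn (iteratedDerivWithin i η (Ici R)) (Ici R))
    (hci1 : ContinuousOn (iteratedDerivWithin (i+1) η (Ici R)) (Ici R))
    (hdi : ∀ x ∈ Ioi R, HasDerivAt (iteratedDerivWithin i η (Ici R))
      (iteratedDerivWithin (i+1) η (Ici R) x) x)
    (hMi : ∀ ξ ∈ Ici R, |iteratedDerivWithin i η (Ici R) ξ| ≤ Mi)
    (hMi1 : ∀ ξ ∈ Ici R, |iteratedDerivWithin (i+1) η (Ici R) ξ| ≤ Mi1)
    {s : ℝ} (hs : s ∈ Ici R) :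
    HasDerivWithinAt (UU a R η i k)
      (UU a R η (i+1) (k+1) s + (k:ℝ)/s * UU a R η i k s - (k:ℝ)/s * UU a R η i (k+2) s)
      (Ici R) s := by
  have hs0 : 0 < s := lt_of_lt_of_le hR hs
  have hraw := UU_hasDerivWithinAt_raw ha hR k hci hMi hs
  have hib := FF_ibp ha hR hci hci1 hdi hMi hMi1 hs (k := k)
  have heq : UU a R η (i+1) (k+1) s + (k:ℝ)/s * UU a R η i k s - (k:ℝ)/s * UU a R η i (k+2) s
      = (k:ℝ)/s * UU a R η i k s + 2*a*s*UU a R η i k s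
        - s * iteratedDerivWithin i η (Ici R) s := by
    unfold UU
    rw [hib]
    have e1 : s ^ k * (s ^ k)⁻¹ = (1:ℝ) := mul_inv_cancel₀ (pow_ne_zero k hs0.ne')
    have e2 : Real.exp (a * s ^ 2) * Real.exp (-(a * s ^ 2)) = 1 := by
      rw [← Real.exp_add]; simp
    rw [Real.exp_neg]
    field_simp
    ring
  exact heq ▸ hraw


noncomputable def WW (a R : ℝ) (η : ℝ → ℝ) (x : ℝ) : ℝ := (x ^ 2)⁻¹ * UU a R η 0 0 x

noncomputable def BB (a R : ℝ) (η : ℝ → ℝ) (s : ℝ) : ℝ := ∫ x in Ioi s, WW a R η x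

lemma wrep_eq (b R : ℝ) (η : ℝ → ℝ) : wrep b η = fun s => s * BB (b/4) R η s := by
  funext s
  unfold wrep BB
  congr 1
  apply MeasureTheory.integral_congr_ae
  apply Eventually.of_forall
  intro x
  show (x^2)⁻¹ * (∫ ξ in Ioi x, ξ * Real.exp (-(b/4)*(ξ^2 - x^2)) * η ξ) = WW (b/4) R η x
  unfold WW UU FF
  have h1 : (∫ ξ in Ioi x, ξ * Real.exp (-(b/4)*(ξ^2 - x^2)) * η ξ)
      = Real.exp (b/4*x^2) * ∫ ξ in Ioi x, K (b/4) 0 ξ * iteratedDerivWithin 0 η (Ici R) ξ := by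
    rw [← MeasureTheory.integral_const_mul]
    apply MeasureTheory.integral_congr_ae
    apply Eventually.of_forall
    intro ξ
    unfold K
    simp only [iteratedDerivWithin_zero, pow_zero, inv_one, mul_one]
    have h2 : Real.exp (-(b/4) * (ξ^2 - x^2)) = Real.exp (b/4*x^2) * Real.exp (-(b/4*ξ^2)) := by
      rw [← Real.exp_add]
      ring_nf
    rw [h2]
    ring
  rw [h1]
  ring

lemma WW_continuousOn {a R : ℝ} {η : ℝ → ℝ} (ha : 0 < a) (hR : 0 < R) {M : ℝ}
    (hc : ContinuousOn (iteratedDerivWithin 0 η (Ici R)) (Ici R))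
    (hM : ∀ ξ ∈ Ici R, |iteratedDerivWithin 0 η (Ici R) ξ| ≤ M) :
    ContinuousOn (WW a R η) (Ici R) := by
  apply ContinuousOn.mul
  · apply ContinuousOn.inv₀ (continuous_pow 2).continuousOn
    intro x hx
    exact pow_ne_zero _ (lt_of_lt_of_le hR hx).ne'
  · apply ContinuousOn.mul
    · exact Continuous.continuousOn (by continuity)
    · exact FF_continuousOn ha hR 0 hc hM

lemma WW_integrableOn {a R : ℝ} {η : ℝ → ℝ} (ha : 0 < a) (hR : 0 < R) {M : ℝ}
    (hc : ContinuousOn (iteratedDerivWithin 0 η (Ici R)) (Ici R))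
    (hM : ∀ ξ ∈ Ici R, |iteratedDerivWithin 0 η (Ici R) ξ| ≤ M)
    {s : ℝ} (hs : R ≤ s) :
    IntegrableOn (WW a R η) (Ioi s) := by
  have hs0 : 0 < s := lt_of_lt_of_le hR hs
  refine Integrable.mono' ((invsq_integrableOn hs0).const_mul ((2*a)⁻¹ * M)) ?_ ?_
  · exact ((WW_continuousOn ha hR hc hM).mono (Ici_subset_Ici.2 hs)).aestronglyMeasurable
      measurableSet_Ici |>.mono_measure (Measure.restrict_mono Ioi_subset_Ici_self le_rfl)
  · filter_upwards [ae_restrict_mem measurableSet_Ioi] with x hx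
    have hx0 : (0:ℝ) < x := lt_trans hs0 hx
    have hU : |UU a R η 0 0 x| ≤ (2*a)⁻¹ * M :=
      UU_abs_le ha hR hc hM (le_trans hs (le_of_lt hx))
    calc ‖WW a R η x‖ = (x^2)⁻¹ * |UU a R η 0 0 x| := by
          rw [Real.norm_eq_abs]; unfold WW
          rw [abs_mul, abs_of_nonneg (by positivity : (0:ℝ) ≤ (x^2)⁻¹)]
      _ ≤ (x^2)⁻¹ * ((2*a)⁻¹ * M) := by
          exact mul_le_mul_of_nonneg_left hU (by positivity)
      _ = (2*a)⁻¹ * M * (x^2)⁻¹ := by ring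

lemma BB_hasDerivWithinAt {a R : ℝ} {η : ℝ → ℝ} (ha : 0 < a) (hR : 0 < R) {M : ℝ}
    (hc : ContinuousOn (iteratedDerivWithin 0 η (Ici R)) (Ici R))
    (hM : ∀ ξ ∈ Ici R, |iteratedDerivWithin 0 η (Ici R) ξ| ≤ M)
    {s : ℝ} (hs : s ∈ Ici R) :
    HasDerivWithinAt (BB a R η) (-(WW a R η s)) (Ici R) s :=
  hasDerivWithinAt_integral_Ioi (WW_continuousOn ha hR hc hM) (WW_integrableOn ha hR hc hM le_rfl) hs

lemma BB_abs_le {a R : ℝ} {η : ℝ → ℝ} (ha : 0 < a) (hR : 0 < R) {M s₀ s : ℝ}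
    (hc : ContinuousOn (iteratedDerivWithin 0 η (Ici R)) (Ici R))
    (hMg : ∀ ξ ∈ Ici R, |iteratedDerivWithin 0 η (Ici R) ξ| ≤ M)
    (hs₀ : R ≤ s₀) {Mt : ℝ}
    (hMt : ∀ ξ ∈ Ici s₀, |iteratedDerivWithin 0 η (Ici R) ξ| ≤ Mt)
    (hs : s₀ ≤ s) :
    |BB a R η s| ≤ (2*a)⁻¹ * Mt * s⁻¹ := by
  have hs₀0 : 0 < s₀ := lt_of_lt_of_le hR hs₀
  have hs0 : 0 < s := lt_of_lt_of_le hs₀0 hs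
  have hMt0 : 0 ≤ Mt := le_trans (abs_nonneg _) (hMt s₀ self_mem_Ici)
  unfold BB
  calc |∫ x in Ioi s, WW a R η x|
      ≤ ∫ x in Ioi s, (2*a)⁻¹ * Mt * (x^2)⁻¹ := by
        rw [← Real.norm_eq_abs]
        apply MeasureTheory.norm_integral_le_of_norm_le
          ((invsq_integrableOn hs0).const_mul ((2*a)⁻¹ * Mt))
        filter_upwards [ae_restrict_mem measurableSet_Ioi] with x hx
        have hx0 : (0:ℝ) < x := lt_trans hs0 hx
        have hU : |UU a R η 0 0 x| ≤ (2*a)⁻¹ * Mt :=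
          UU_abs_le ha hs₀0 (hc.mono (Ici_subset_Ici.2 hs₀))
            hMt (le_trans hs (le_of_lt hx))
        calc ‖WW a R η x‖ = (x^2)⁻¹ * |UU a R η 0 0 x| := by
              rw [Real.norm_eq_abs]; unfold WW
              rw [abs_mul, abs_of_nonneg (by positivity : (0:ℝ) ≤ (x^2)⁻¹)]
          _ ≤ (x^2)⁻¹ * ((2*a)⁻¹ * Mt) := mul_le_mul_of_nonneg_left hU (by positivity)
          _ = (2*a)⁻¹ * Mt * (x^2)⁻¹ := by ring
    _ = (2*a)⁻¹ * Mt * s⁻¹ := by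
        rw [MeasureTheory.integral_const_mul, invsq_integral hs0]


def Dterm (t : ℝ × ℕ × ℕ × ℕ) : List (ℝ × ℕ × ℕ × ℕ) :=
  [(-t.1 * t.2.1, t.2.1 + 1, t.2.2.1, t.2.2.2),
   (t.1, t.2.1, t.2.2.1 + 1, t.2.2.2 + 1),
   (t.1 * t.2.2.2, t.2.1 + 1, t.2.2.1, t.2.2.2),
   (-(t.1 * t.2.2.2), t.2.1 + 1, t.2.2.1, t.2.2.2 + 2)]

noncomputable def evalT (a R : ℝ) (η : ℝ → ℝ) (t : ℝ × ℕ × ℕ × ℕ) (s : ℝ) : ℝ :=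
  t.1 * (s ^ t.2.1)⁻¹ * UU a R η t.2.2.1 t.2.2.2 s

noncomputable def evalL (a R : ℝ) (η : ℝ → ℝ) (L : List (ℝ × ℕ × ℕ × ℕ)) (s : ℝ) : ℝ :=
  (L.map (fun t => evalT a R η t s)).sum

lemma evalL_nil (a R : ℝ) (η : ℝ → ℝ) (s : ℝ) : evalL a R η [] s = 0 := rfl

lemma evalL_cons (a R : ℝ) (η : ℝ → ℝ) (t : ℝ × ℕ × ℕ × ℕ) (L : List (ℝ × ℕ × ℕ × ℕ)) (s : ℝ) :
    evalL a R η (t :: L) s = evalT a R η t s + evalL a R η L s := by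
  unfold evalL
  simp

lemma evalL_append (a R : ℝ) (η : ℝ → ℝ) (L₁ L₂ : List (ℝ × ℕ × ℕ × ℕ)) (s : ℝ) :
    evalL a R η (L₁ ++ L₂) s = evalL a R η L₁ s + evalL a R η L₂ s := by
  unfold evalL
  simp

lemma Dterm_index_le {n : ℕ} (t : ℝ × ℕ × ℕ × ℕ) (ht : t.2.2.1 ≤ n) :
    ∀ u ∈ Dterm t, u.2.2.1 ≤ n + 1 := by
  intro u hu
  simp only [Dterm, List.mem_cons, List.mem_singleton] at hu
  rcases hu with rfl | rfl | rfl | rfl | h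
  all_goals simp_all
  all_goals omega

lemma evalT_hasDerivWithinAt {a R : ℝ} {η : ℝ → ℝ} (hR : 0 < R)
    (t : ℝ × ℕ × ℕ × ℕ)
    (hU : ∀ s ∈ Ici R, HasDerivWithinAt (UU a R η t.2.2.1 t.2.2.2)
      (UU a R η (t.2.2.1+1) (t.2.2.2+1) s + (t.2.2.2:ℝ)/s * UU a R η t.2.2.1 t.2.2.2 s
        - (t.2.2.2:ℝ)/s * UU a R η t.2.2.1 (t.2.2.2+2) s) (Ici R) s)
    {s : ℝ} (hs : s ∈ Ici R) :
    HasDerivWithinAt (fun y => evalT a R η t y) (evalL a R η (Dterm t) s) (Ici R) s := by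
  obtain ⟨c, r, i, k⟩ := t
  have hs0 : 0 < s := lt_of_lt_of_le hR hs
  have h1 : HasDerivAt (fun y : ℝ => c * (y ^ r)⁻¹) (c * (-(r:ℝ) * (s^(r+1))⁻¹)) s :=
    (hasDerivAt_inv_pow r hs0.ne').const_mul c
  have h2 := h1.hasDerivWithinAt.mul (hU s hs)
  have heq : (c * (-(r:ℝ) * (s^(r+1))⁻¹)) * UU a R η i k s
      + (c * (s ^ r)⁻¹) * (UU a R η (i+1) (k+1) s + (k:ℝ)/s * UU a R η i k s
        - (k:ℝ)/s * UU a R η i (k+2) s)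
      = evalL a R η (Dterm (c, r, i, k)) s := by
    simp only [Dterm, evalL, evalT, List.map_cons, List.map_nil, List.sum_cons, List.sum_nil]
    field_simp
    ring
  have h3 : HasDerivWithinAt (fun y => c * (y ^ r)⁻¹ * UU a R η i k y)
      (evalL a R η (Dterm (c, r, i, k)) s) (Ici R) s := heq ▸ h2
  exact h3

lemma evalL_hasDerivWithinAt {a R : ℝ} {η : ℝ → ℝ} (hR : 0 < R) {n : ℕ}
    (hU : ∀ i k, i ≤ n → ∀ s ∈ Ici R, HasDerivWithinAt (UU a R η i k)
      (UU a R η (i+1) (k+1) s + (k:ℝ)/s * UU a R η i k s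
        - (k:ℝ)/s * UU a R η i (k+2) s) (Ici R) s)
    (L : List (ℝ × ℕ × ℕ × ℕ)) (hL : ∀ t ∈ L, t.2.2.1 ≤ n) {s : ℝ} (hs : s ∈ Ici R) :
    HasDerivWithinAt (fun y => evalL a R η L y) (evalL a R η (L.flatMap Dterm) s) (Ici R) s := by
  induction L with
  | nil =>
    simp only [evalL_nil, List.flatMap_nil]
    exact (hasDerivWithinAt_const s (Ici R) (0:ℝ)).congr (fun y _ => rfl) rfl
  | cons t L ih =>
    have hT := evalT_hasDerivWithinAt hR t (fun s' hs' => hU _ _ (hL t (List.mem_cons_self)) s' hs') hs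
    have hL' : ∀ u ∈ L, u.2.2.1 ≤ n := fun u hu => hL u (List.mem_cons_of_mem _ hu)
    have := hT.add (ih hL')
    have hflat : (t :: L).flatMap Dterm = Dterm t ++ L.flatMap Dterm := by
      simp [List.flatMap_cons]
    rw [hflat]
    have hrw : evalL a R η (Dterm t ++ L.flatMap Dterm) s
        = evalL a R η (Dterm t) s + evalL a R η (L.flatMap Dterm) s := evalL_append _ _ _ _ _ _
    rw [hrw]
    exact this.congr (fun y _ => (evalL_cons a R η t L y).symm) ((evalL_cons a R η t L s).symm)

lemma evalL_tendsto {a R : ℝ} {η : ℝ → ℝ} {n : ℕ}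
    (hUt : ∀ i k, i ≤ n → Tendsto (UU a R η i k) atTop (nhds 0))
    (L : List (ℝ × ℕ × ℕ × ℕ)) (hL : ∀ t ∈ L, t.2.2.1 ≤ n) :
    Tendsto (fun s => evalL a R η L s) atTop (nhds 0) := by
  induction L with
  | nil => simpa [evalL_nil] using tendsto_const_nhds
  | cons t L ih =>
    have hL' : ∀ u ∈ L, u.2.2.1 ≤ n := fun u hu => hL u (List.mem_cons_of_mem _ hu)
    have hT : Tendsto (fun s => evalT a R η t s) atTop (nhds 0) := by
      apply squeeze_zero_norm' (a := fun s => |t.1| * |UU a R η t.2.2.1 t.2.2.2 s|)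
      · filter_upwards [Ici_mem_atTop (1:ℝ)] with s hs1
        have hp : (1:ℝ) ≤ s ^ t.2.1 := one_le_pow₀ hs1
        have h1 : (s ^ t.2.1)⁻¹ ≤ 1 := by simpa using inv_anti₀ one_pos hp
        have h0 : (0:ℝ) ≤ (s ^ t.2.1)⁻¹ := by positivity
        calc ‖evalT a R η t s‖
            = |t.1| * ((s ^ t.2.1)⁻¹ * |UU a R η t.2.2.1 t.2.2.2 s|) := by
              rw [Real.norm_eq_abs]
              unfold evalT
              rw [abs_mul, abs_mul, abs_of_nonneg h0]
              ring
          _ ≤ |t.1| * (1 * |UU a R η t.2.2.1 t.2.2.2 s|) := by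
              apply mul_le_mul_of_nonneg_left _ (abs_nonneg _)
              exact mul_le_mul_of_nonneg_right h1 (abs_nonneg _)
          _ = |t.1| * |UU a R η t.2.2.1 t.2.2.2 s| := by ring
      · have := ((hUt t.2.2.1 t.2.2.2 (hL t (List.mem_cons_self))).abs).const_mul |t.1|
        simpa using this
    have hsum := hT.add (ih hL')
    rw [add_zero] at hsum
    exact hsum.congr (fun s => (evalL_cons a R η t L s).symm)

end HRS

/-- If `η ∈ C^m([R,∞))` with `η^{(j)} → 0` at infinity for `j = 0,…,m`,
then the solution `w` of the Cauchy problem given by the representation formula is of class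
`C^{m+2}` on `[R,∞)` and `w^{(j)} → 0` at infinity for every `j = 0,…,m+2`. -/
theorem higher_regularity_of_solution
    (b R : ℝ) (m : ℕ) (hb : 0 < b) (hR : 0 < R) (hm : 1 ≤ m) (η : ℝ → ℝ)
    (hη : ContDiffOn ℝ m η (Set.Ici R))
    (hη0 : ∀ j ≤ m,
      Filter.Tendsto (iteratedDerivWithin j η (Set.Ici R)) Filter.atTop (nhds 0)) :
    ContDiffOn ℝ (m + 2) (wrep b η) (Set.Ici R) ∧
    ∀ j ≤ m + 2,
      Filter.Tendsto (iteratedDerivWithin j (wrep b η) (Set.Ici R)) Filter.atTop (nhds 0) := by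
  have ha : (0:ℝ) < b / 4 := by positivity
  set a := b / 4 with ha_def
  have hUDO := uniqueDiffOn_Ici R
  have hm0 : 0 ≤ m := Nat.zero_le m
  -- facts about iterated derivatives of η
  have hcont : ∀ i, i ≤ m → ContinuousOn (iteratedDerivWithin i η (Ici R)) (Ici R) := by
    intro i hi
    exact hη.continuousOn_iteratedDerivWithin (by exact_mod_cast hi) hUDO
  have hbdd : ∀ i, i ≤ m → ∃ M, 0 ≤ M ∧ ∀ ξ ∈ Ici R, |iteratedDerivWithin i η (Ici R) ξ| ≤ M :=
    fun i hi => HRS.bounded_of_tendsto (hcont i hi) (hη0 i hi)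
  obtain ⟨M₀, hM₀0, hM₀⟩ := hbdd 0 hm0
  have hdAt : ∀ i, i + 1 ≤ m → ∀ x ∈ Ioi R, HasDerivAt (iteratedDerivWithin i η (Ici R))
      (iteratedDerivWithin (i+1) η (Ici R) x) x := by
    intro i hi x hx
    have hD : DifferentiableOn ℝ (iteratedDerivWithin i η (Ici R)) (Ici R) :=
      hη.differentiableOn_iteratedDerivWithin (by exact_mod_cast Nat.lt_of_succ_le hi) hUDO
    have h1 : DifferentiableAt ℝ (iteratedDerivWithin i η (Ici R)) x :=
      (hD x (mem_Ici.2 (le_of_lt hx))).differentiableAt (Ici_mem_nhds hx)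
    have h2 : iteratedDerivWithin (i+1) η (Ici R) x
        = deriv (iteratedDerivWithin i η (Ici R)) x := by
      rw [iteratedDerivWithin_succ,
        derivWithin_of_mem_nhds (Ici_mem_nhds hx)]
    rw [h2]
    exact h1.hasDerivAt
  -- UU facts
  have hUt : ∀ i k, i ≤ m → Tendsto (HRS.UU a R η i k) atTop (nhds 0) :=
    fun i k hi => HRS.UU_tendsto ha hR k (hcont i hi) (hη0 i hi)
  have hUd : ∀ i k, i + 1 ≤ m → ∀ s ∈ Ici R, HasDerivWithinAt (HRS.UU a R η i k)
      (HRS.UU a R η (i+1) (k+1) s + (k:ℝ)/s * HRS.UU a R η i k s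
        - (k:ℝ)/s * HRS.UU a R η i (k+2) s) (Ici R) s := by
    intro i k hi s hs
    obtain ⟨Mi, _, hMi⟩ := hbdd i (le_trans (Nat.le_succ i) hi)
    obtain ⟨Mi1, _, hMi1⟩ := hbdd (i+1) hi
    exact HRS.UU_hasDerivWithinAt ha hR (hcont i (le_trans (Nat.le_succ i) hi))
      (hcont (i+1) hi) (hdAt i hi) hMi hMi1 hs
  have hweq : wrep b η = fun s => s * HRS.BB a R η s := HRS.wrep_eq b R η
  -- first derivative of w
  have hw1 : ∀ s ∈ Ici R, HasDerivWithinAt (wrep b η)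
      (HRS.BB a R η s - s⁻¹ * HRS.UU a R η 0 0 s) (Ici R) s := by
    intro s hs
    have hs0 : 0 < s := lt_of_lt_of_le hR hs
    rw [hweq]
    have h1 := (hasDerivWithinAt_id s (Ici R)).mul
      (HRS.BB_hasDerivWithinAt ha hR (hcont 0 hm0) hM₀ hs)
    have heq : (1:ℝ) * HRS.BB a R η s + id s * -(HRS.WW a R η s)
        = HRS.BB a R η s - s⁻¹ * HRS.UU a R η 0 0 s := by
      unfold HRS.WW
      simp only [id]
      field_simp
      ring
    exact heq ▸ h1
  have hd1 : ∀ s ∈ Ici R, derivWithin (wrep b η) (Ici R) s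
      = HRS.BB a R η s - s⁻¹ * HRS.UU a R η 0 0 s :=
    fun s hs => (hw1 s hs).derivWithin (hUDO s hs)
  -- second derivative of w
  have hg1d : ∀ s ∈ Ici R, HasDerivWithinAt
      (fun y => HRS.BB a R η y - y⁻¹ * HRS.UU a R η 0 0 y)
      (η s + HRS.evalL a R η [(-(2*a), 0, 0, 0)] s) (Ici R) s := by
    intro s hs
    have hs0 : 0 < s := lt_of_lt_of_le hR hs
    have hB := HRS.BB_hasDerivWithinAt ha hR (hcont 0 hm0) hM₀ hs
    have hinv : HasDerivAt (fun y : ℝ => y⁻¹) (-(s^2)⁻¹) s := by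
      simpa using hasDerivAt_inv hs0.ne'
    have hU00 := HRS.UU_hasDerivWithinAt_raw ha hR 0 (hcont 0 hm0) hM₀ hs
    have h3 := hB.sub (hinv.hasDerivWithinAt.mul hU00)
    have heq : -(HRS.WW a R η s) - ((-(s^2)⁻¹) * HRS.UU a R η 0 0 s
        + s⁻¹ * (((0:ℕ):ℝ)/s * HRS.UU a R η 0 0 s + 2*a*s*HRS.UU a R η 0 0 s
          - s * iteratedDerivWithin 0 η (Ici R) s))
        = η s + HRS.evalL a R η [(-(2*a), 0, 0, 0)] s := by
      simp only [HRS.evalL, HRS.evalT, List.map_cons, List.map_nil, List.sum_cons,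
        List.sum_nil, iteratedDerivWithin_zero]
      unfold HRS.WW
      field_simp
      ring
    exact heq ▸ h3
  -- formulas for higher derivatives
  have key : ∀ n, n ≤ m → ∃ L : List (ℝ × ℕ × ℕ × ℕ), (∀ t ∈ L, t.2.2.1 ≤ n) ∧
      ∀ s ∈ Ici R, iteratedDerivWithin (n+2) (wrep b η) (Ici R) s
        = iteratedDerivWithin n η (Ici R) s + HRS.evalL a R η L s := by
    intro n
    induction n with
    | zero =>
      intro _
      refine ⟨[(-(2*a), 0, 0, 0)], by simp, ?_⟩
      intro s hs
      rw [show (0+2 : ℕ) = 1+1 from rfl, iteratedDerivWithin_succ]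
      have hcongr : derivWithin (iteratedDerivWithin 1 (wrep b η) (Ici R)) (Ici R) s
          = derivWithin (fun y => HRS.BB a R η y - y⁻¹ * HRS.UU a R η 0 0 y) (Ici R) s := by
        apply derivWithin_congr
        · intro y hy
          rw [iteratedDerivWithin_one, hd1 y hy]
        · rw [iteratedDerivWithin_one, hd1 s hs]
      rw [hcongr, (hg1d s hs).derivWithin (hUDO s hs)]
      simp [iteratedDerivWithin_zero]
    | succ n ih =>
      intro hn1
      obtain ⟨L, hLi, hLf⟩ := ih (le_trans (Nat.le_succ n) hn1)
      refine ⟨L.flatMap HRS.Dterm, ?_, ?_⟩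
      · intro t ht
        rw [List.mem_flatMap] at ht
        obtain ⟨u, hu, htu⟩ := ht
        exact HRS.Dterm_index_le u (hLi u hu) t htu
      · intro s hs
        rw [show n+1+2 = (n+2)+1 by omega, iteratedDerivWithin_succ]
        have hcongr : derivWithin (iteratedDerivWithin (n+2) (wrep b η) (Ici R)) (Ici R) s
            = derivWithin (fun y => iteratedDerivWithin n η (Ici R) y + HRS.evalL a R η L y)
              (Ici R) s :=
          derivWithin_congr (fun y hy => hLf y hy) (hLf s hs)
        rw [hcongr]
        have hηd : HasDerivWithinAt (iteratedDerivWithin n η (Ici R))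
            (iteratedDerivWithin (n+1) η (Ici R) s) (Ici R) s := by
          have hD : DifferentiableOn ℝ (iteratedDerivWithin n η (Ici R)) (Ici R) :=
            hη.differentiableOn_iteratedDerivWithin
              (by exact_mod_cast Nat.lt_of_succ_le hn1) hUDO
          have h4 := (hD s hs).hasDerivWithinAt
          rwa [← iteratedDerivWithin_succ] at h4
        have hE := HRS.evalL_hasDerivWithinAt hR
          (fun i k hik => hUd i k (by omega)) L hLi hs
        exact ((hηd.add hE).derivWithin (hUDO s hs))
  constructor
  · -- regularity
    have hKeq : HRS.K a 0 = fun s : ℝ => s * Real.exp (-(a*s^2)) := by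
      funext x
      unfold HRS.K
      simp
    have hKc : ContDiffOn ℝ (m : WithTop ℕ∞) (HRS.K a 0) (Ici R) := by
      rw [hKeq]
      apply ContDiff.contDiffOn
      exact contDiff_id.mul (Real.contDiff_exp.comp
        ((contDiff_const.mul (contDiff_id.pow 2)).neg))
    have c1 : ContDiffOn ℝ ((m : WithTop ℕ∞) + 1) (HRS.FF a R η 0 0) (Ici R) := by
      rw [contDiffOn_succ_iff_derivWithin hUDO]
      refine ⟨fun s hs => (HRS.FF_hasDerivWithinAt ha hR 0 (hcont 0 hm0) hM₀
        hs).differentiableWithinAt, by simp, ?_⟩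
      apply ContDiffOn.congr ((hKc.mul hη).neg)
      intro s hs
      rw [(HRS.FF_hasDerivWithinAt ha hR 0 (hcont 0 hm0) hM₀ hs).derivWithin (hUDO s hs)]
      rw [iteratedDerivWithin_zero]
    have c2 : ContDiffOn ℝ ((m : WithTop ℕ∞) + 1) (HRS.UU a R η 0 0) (Ici R) := by
      have hUeq : HRS.UU a R η 0 0 = fun s => Real.exp (a*s^2) * HRS.FF a R η 0 0 s := by
        funext x
        unfold HRS.UU
        simp
      rw [hUeq]
      exact ((Real.contDiff_exp.comp (contDiff_const.mul
        (contDiff_id.pow 2))).contDiffOn).mul c1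
    have c3 : ContDiffOn ℝ ((m : WithTop ℕ∞) + 1) (HRS.WW a R η) (Ici R) := by
      have hWeq : HRS.WW a R η = fun x => (x^2)⁻¹ * HRS.UU a R η 0 0 x := rfl
      rw [hWeq]
      apply ContDiffOn.mul _ c2
      apply ContDiffOn.inv ((contDiff_id.pow 2).contDiffOn)
      intro x hx
      exact pow_ne_zero _ (lt_of_lt_of_le hR hx).ne'
    have c4 : ContDiffOn ℝ (((m : WithTop ℕ∞) + 1) + 1) (HRS.BB a R η) (Ici R) := by
      rw [contDiffOn_succ_iff_derivWithin hUDO]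
      refine ⟨fun s hs => (HRS.BB_hasDerivWithinAt ha hR (hcont 0 hm0) hM₀
        hs).differentiableWithinAt, by simp, ?_⟩
      apply ContDiffOn.congr c3.neg
      intro s hs
      rw [(HRS.BB_hasDerivWithinAt ha hR (hcont 0 hm0) hM₀ hs).derivWithin (hUDO s hs)]
    have hdeg : ((m : WithTop ℕ∞) + 2) = ((m : WithTop ℕ∞) + 1) + 1 := by
      rw [add_assoc]
      norm_num
    have c5 : ContDiffOn ℝ ((m : WithTop ℕ∞) + 2) (wrep b η) (Ici R) := by
      rw [hweq, hdeg]
      exact contDiff_id.contDiffOn.mul c4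
    exact_mod_cast c5
  · -- decay of derivatives
    intro j hj
    match j, hj with
    | 0, _ =>
      rw [iteratedDerivWithin_zero]
      rw [Metric.tendsto_atTop]
      intro ε hε
      obtain ⟨N, hN⟩ := Metric.tendsto_atTop.1 (hη0 0 hm0) (a * ε) (mul_pos ha hε)
      refine ⟨max N R, fun s hs => ?_⟩
      have hNR : R ≤ max N R := le_max_right _ _
      have hs0 : 0 < s := lt_of_lt_of_le (lt_of_lt_of_le hR hNR) hs
      have hMt : ∀ ξ ∈ Ici (max N R), |iteratedDerivWithin 0 η (Ici R) ξ| ≤ a * ε := by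
        intro ξ hξ
        have := hN ξ (le_trans (le_max_left _ _) hξ)
        rw [Real.dist_eq, sub_zero] at this
        exact this.le
      have hBB := HRS.BB_abs_le ha hR (hcont 0 hm0) hM₀ hNR hMt hs
      rw [Real.dist_eq, sub_zero, hweq]
      show |s * HRS.BB a R η s| < ε
      rw [abs_mul, abs_of_nonneg hs0.le]
      calc s * |HRS.BB a R η s| ≤ s * ((2*a)⁻¹ * (a*ε) * s⁻¹) :=
            mul_le_mul_of_nonneg_left hBB hs0.le
        _ = ε / 2 := by field_simp
        _ < ε := by linarith
    | 1, _ =>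
      have hBB0 : Tendsto (HRS.BB a R η) atTop (nhds 0) := by
        apply squeeze_zero_norm' (a := fun s => (2*a)⁻¹ * M₀ * s⁻¹)
        · filter_upwards [Ici_mem_atTop R] with s hs
          exact HRS.BB_abs_le ha hR (hcont 0 hm0) hM₀ le_rfl hM₀ hs
        · simpa using (tendsto_inv_atTop_zero (𝕜 := ℝ)).const_mul ((2*a)⁻¹ * M₀)
      have hU0 : Tendsto (fun s => s⁻¹ * HRS.UU a R η 0 0 s) atTop (nhds 0) := by
        apply squeeze_zero_norm' (a := fun s => |HRS.UU a R η 0 0 s|)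
        · filter_upwards [Ici_mem_atTop (1:ℝ)] with s hs1
          have h1 : s⁻¹ ≤ 1 := by simpa using inv_anti₀ one_pos (mem_Ici.1 hs1)
          have h0 : (0:ℝ) ≤ s⁻¹ := inv_nonneg.mpr (le_trans zero_le_one hs1)
          rw [Real.norm_eq_abs, abs_mul, abs_of_nonneg h0]
          calc s⁻¹ * |HRS.UU a R η 0 0 s| ≤ 1 * |HRS.UU a R η 0 0 s| :=
                mul_le_mul_of_nonneg_right h1 (abs_nonneg _)
            _ = |HRS.UU a R η 0 0 s| := one_mul _
        · simpa using (hUt 0 0 hm0).abs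
      have hlim := hBB0.sub hU0
      rw [sub_zero] at hlim
      apply hlim.congr'
      filter_upwards [Ici_mem_atTop R] with s hs
      rw [iteratedDerivWithin_one, hd1 s hs]
    | (n+2), hj2 =>
      have hn : n ≤ m := by omega
      obtain ⟨L, hLi, hLf⟩ := key n hn
      have h1 := (hη0 n hn).add (HRS.evalL_tendsto (fun i k hik => hUt i k (le_trans hik hn))
        L hLi)
      rw [add_zero] at h1
      apply h1.congr'
      filter_upwards [Ici_mem_atTop R] with s hs
      exact (hLf s hs).symm
end

section
/- Let n ≥ 2 and k ≥ 3 be integers, σ > 0, K a bounded open neighborhood of (1,…,1,0) in ℝⁿ, and M > 0. Then there exists R ≥ 1, depending only on k, σ, K and M, such that for every v ∈ C^k([R,∞)) with ‖v‖_ℑ ≤ M, for every θ ∈ [0,1] and every s ∈ [R,∞), the point ω(v;θ)(s) := ( (σs/(σs + θ v(s))) · 1⃗_{n−1}, −σs θ v''(s)/(1 + (σ + θ v'(s))²) ) ∈ ℝⁿ lies in K. -/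
open Set Filter MeasureTheory

/-- The vector in `ℝⁿ` whose first `n-1` coordinates equal `a` and whose last
coordinate equals `b`. -/
noncomputable def cvec (n : ℕ) (a b : ℝ) : Fin n → ℝ :=
  fun i => if (i : ℕ) < n - 1 then a else b

set_option maxHeartbeats 1600000 in
/-- For `R` large (depending on `k`, `σ`, `K`, `M`), for every `v` with
`‖v‖_ℑ ≤ M`, every `θ ∈ [0,1]` and every `s ≥ R`, the rescaled curvature vector
`ω(v;θ)(s) = (σs/(σs+θv)·1⃗, −σsθv''/(1+(σ+θv')²))` lies in `K`. -/
theorem omega_stays_in_K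
    (n k : ℕ) (hn : 2 ≤ n) (hk : 3 ≤ k) (σ : ℝ) (hσ : 0 < σ)
    (K : Set (Fin n → ℝ)) (hKopen : IsOpen K) (hKbdd : Bornology.IsBounded K)
    (hKmem : cvec n 1 0 ∈ K) (M : ℝ) (hM : 0 < M) :
    ∃ R : ℝ, 1 ≤ R ∧ ∀ v : ℝ → ℝ, ContDiffOn ℝ k v (Set.Ici R) →
      (∀ j < k, ∀ s ∈ Set.Ici R,
        s ^ (j + 1) * |iteratedDerivWithin j v (Set.Ici R) s| ≤ M) →
      (∀ s ∈ Set.Ici R,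
        s ^ k * |iteratedDerivWithin k v (Set.Ici R) s| ≤ M) →
      ∀ θ ∈ Set.Icc (0 : ℝ) 1, ∀ s ∈ Set.Ici R,
        cvec n (σ * s / (σ * s + θ * v s))
          (-(σ * s * θ * iteratedDerivWithin 2 v (Set.Ici R) s) /
            (1 + (σ + θ * derivWithin v (Set.Ici R) s) ^ 2)) ∈ K := by
  obtain ⟨ε, hε, hball⟩ := Metric.isOpen_iff.mp hKopen _ hKmem
  set R : ℝ := 1 + 2*M/σ + 4*M/(σ*ε) + 2*σ*M/ε with hRdef
  have hR1 : (1:ℝ) ≤ R := by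
    have h1 : 0 ≤ 2*M/σ := by positivity
    have h2 : 0 ≤ 4*M/(σ*ε) := by positivity
    have h3 : 0 ≤ 2*σ*M/ε := by positivity
    simp only [hRdef]; linarith
  have hR0 : (0:ℝ) < R := lt_of_lt_of_le one_pos hR1
  have hR2 : 2*M ≤ σ*R := by
    have h : 2*M/σ ≤ R := by
      have h2 : 0 ≤ 4*M/(σ*ε) := by positivity
      have h3 : 0 ≤ 2*σ*M/ε := by positivity
      simp only [hRdef]; linarith
    calc 2*M = (2*M/σ) * σ := by field_simp
    _ ≤ R * σ := mul_le_mul_of_nonneg_right h hσ.le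
    _ = σ * R := mul_comm _ _
  have hR3 : 4*M ≤ σ*ε*R := by
    have h : 4*M/(σ*ε) ≤ R := by
      have h2 : 0 ≤ 2*M/σ := by positivity
      have h3 : 0 ≤ 2*σ*M/ε := by positivity
      simp only [hRdef]; linarith
    have hσε : 0 < σ*ε := by positivity
    calc 4*M = (4*M/(σ*ε)) * (σ*ε) := by field_simp
    _ ≤ R * (σ*ε) := mul_le_mul_of_nonneg_right h hσε.le
    _ = σ*ε*R := mul_comm _ _
  have hR4 : 2*σ*M ≤ ε*R := by
    have h : 2*σ*M/ε ≤ R := by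
      have h2 : 0 ≤ 2*M/σ := by positivity
      have h3 : 0 ≤ 4*M/(σ*ε) := by positivity
      simp only [hRdef]; linarith
    calc 2*σ*M = (2*σ*M/ε) * ε := by field_simp
    _ ≤ R * ε := mul_le_mul_of_nonneg_right h hε.le
    _ = ε*R := mul_comm _ _
  clear hRdef
  clear_value R
  refine ⟨R, hR1, ?_⟩
  intro v hv hlow _hhigh θ hθ s hs
  obtain ⟨hθ0, hθ1⟩ := hθ
  have hsR : R ≤ s := hs
  have hs1 : 1 ≤ s := le_trans hR1 hsR
  have hs0 : 0 < s := lt_of_lt_of_le one_pos hs1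
  -- bound on v
  have hA : s * |v s| ≤ M := by
    have := hlow 0 (by omega) s hs
    simpa [iteratedDerivWithin_zero] using this
  -- bound on v''
  have hD2 : s^3 * |iteratedDerivWithin 2 v (Set.Ici R) s| ≤ M := by
    have := hlow 2 (by omega) s hs
    norm_num at this
    exact this
  set D2 := iteratedDerivWithin 2 v (Set.Ici R) s with hD2def
  set D1 := derivWithin v (Set.Ici R) s with hD1def
  clear hD2def hD1def
  clear_value D2 D1
  have habsD2 : 0 ≤ |D2| := abs_nonneg _
  -- denominator bound for first coordinate
  have hθv : |θ * v s| ≤ M / s := by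
    rw [abs_mul, abs_of_nonneg hθ0]
    have h1 : θ * |v s| ≤ |v s| := by nlinarith [abs_nonneg (v s)]
    have h2 : |v s| ≤ M / s := by rw [le_div_iff₀ hs0]; linarith [hA]
    linarith
  have hMs : M / s ≤ σ * s / 2 := by
    rw [div_le_div_iff₀ hs0 two_pos]
    have h1 : σ * R ≤ σ * s := mul_le_mul_of_nonneg_left hsR hσ.le
    have h2 : σ * s * 1 ≤ σ * s * s := by
      apply mul_le_mul_of_nonneg_left hs1 (by positivity)
    nlinarith
  have hd : σ * s / 2 ≤ σ * s + θ * v s := by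
    have := neg_abs_le (θ * v s)
    linarith
  have hd0 : 0 < σ * s + θ * v s := lt_of_lt_of_le (by positivity) hd
  apply hball
  rw [Metric.mem_ball, dist_pi_lt_iff hε]
  intro i
  simp only [cvec]
  split_ifs with hi
  · -- first coordinate
    rw [Real.dist_eq]
    have heq : σ * s / (σ * s + θ * v s) - 1 = -(θ * v s) / (σ * s + θ * v s) := by
      field_simp
      ring
    rw [heq, abs_div, abs_neg, abs_of_pos hd0]
    have h1 : |θ * v s| / (σ * s + θ * v s) ≤ (M / s) / (σ * s / 2) :=
      div_le_div₀ (by positivity) hθv (by positivity) hd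
    have h2 : (M / s) / (σ * s / 2) = 2 * M / (σ * (s * s)) := by
      field_simp
    have h3 : 2 * M / (σ * (s * s)) < ε := by
      rw [div_lt_iff₀ (by positivity)]
      have hss : s ≤ s * s := by nlinarith
      have hεσ : 0 ≤ σ * ε := by positivity
      nlinarith [mul_le_mul_of_nonneg_left hsR hεσ, mul_le_mul_of_nonneg_left hss hεσ]
    linarith
  · -- last coordinate
    rw [Real.dist_eq, sub_zero]
    have he1 : (1:ℝ) ≤ 1 + (σ + θ * D1) ^ 2 := by nlinarith [sq_nonneg (σ + θ * D1)]
    have he0 : (0:ℝ) < 1 + (σ + θ * D1) ^ 2 := lt_of_lt_of_le one_pos he1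
    rw [abs_div, abs_of_pos he0]
    have h1 : |-(σ * s * θ * D2)| / (1 + (σ + θ * D1) ^ 2) ≤ |-(σ * s * θ * D2)| :=
      div_le_self (abs_nonneg _) he1
    have h2 : |-(σ * s * θ * D2)| = σ * s * θ * |D2| := by
      rw [abs_neg, abs_mul, abs_mul, abs_mul, abs_of_pos hσ, abs_of_pos hs0,
        abs_of_nonneg hθ0]
    have h3 : σ * s * θ * |D2| < ε := by
      have hkey : s * s * (σ * s * θ * |D2|) ≤ σ * M := by
        have : σ * θ * (s^3 * |D2|) ≤ σ * 1 * M := by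
          apply mul_le_mul
          · nlinarith
          · exact hD2
          · positivity
          · positivity
        nlinarith [this]
      have hss : R ≤ s * s := by nlinarith
      have hx0 : 0 ≤ σ * s * θ * |D2| := by positivity
      nlinarith [mul_le_mul_of_nonneg_right hss hx0, hR4, hε, hR0]
    linarith [h1, h2.le, h3]
end
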